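/- arXiv:2502.07891 — 4 statements merged into one kernel-verified Lean document; each statement's English description precedes it below -/
import Mathlib

section
/- Let 𝔊 and 𝔊' be two mDAGs with the same set of nodes. If 𝔊 structurally dominates 𝔊', then 𝔊 observationally dominates 𝔊': for every assignment c of finite cardinalities to the visible nodes, every probability distribution realizable by 𝔊' at c is realizable by 𝔊 at c. -/
open scoped Classical

/-! ## Basic structures: pDAGs and mDAGs -/

/-- A partitioned directed acyclic graph (pDAG) with visible node type `V` and
latent node type `L`.  Acyclicity is phrased via the existence of a topological
rank function, which for finite graphs is equivalent to the absence of directed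
cycles. -/
structure pDAG (V L : Type) where
  edge : V ⊕ L → V ⊕ L → Prop
  acyclic : ∃ rank : V ⊕ L → ℕ, ∀ a b, edge a b → rank a < rank b

/-- `P` is a probability distribution on a finite type. -/
def IsDist {α : Type} [Fintype α] (P : α → ℝ) : Prop :=
  (∀ x, 0 ≤ P x) ∧ ∑ x, P x = 1

/-- The joint assignment of outcomes to all (visible and latent) nodes obtained
from an assignment `xv` to the visible nodes and `xl` to the latent nodes. -/
def jointVal {V L : Type} (c : V → ℕ) (k : L → ℕ)
    (xv : (v : V) → Fin (c v)) (xl : (l : L) → Fin (k l)) :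
    (a : V ⊕ L) → Fin (Sum.elim c k a)
  | Sum.inl v => xv v
  | Sum.inr l => xl l

/-- A probability distribution `P` over the visible variables (with cardinalities `c`)
is realizable by the pDAG `G` (with classical unrestricted semantics, arbitrary finite
cardinalities of the latent variables) if there are latent cardinalities `k`, error
cardinalities `e`, error distributions `PE` and functions `f` (each depending only on
the values of the parents and the local error variable) whose induced marginal on the
visible variables is `P`. -/
def pDAG.Realizable {V L : Type} [Fintype V] [Fintype L] [DecidableEq V] [DecidableEq L]
    (G : pDAG V L) (c : V → ℕ) (P : ((v : V) → Fin (c v)) → ℝ) : Prop :=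
  IsDist P ∧
  ∃ (k : L → ℕ) (e : V ⊕ L → ℕ)
    (PE : (a : V ⊕ L) → Fin (e a) → ℝ)
    (f : (a : V ⊕ L) → ((b : V ⊕ L) → Fin (Sum.elim c k b)) → Fin (e a) →
      Fin (Sum.elim c k a)),
    (∀ a, IsDist (PE a)) ∧
    (∀ a g g' ε, (∀ b, G.edge b a → g b = g' b) → f a g ε = f a g' ε) ∧
    ∀ xv : (v : V) → Fin (c v),
      P xv = ∑ xl : (l : L) → Fin (k l), ∑ ε : (a : V ⊕ L) → Fin (e a),
        ∏ a : V ⊕ L,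
          (if jointVal c k xv xl a = f a (jointVal c k xv xl) (ε a) then (1:ℝ) else 0)
            * PE a (ε a)

/-- `G` observationally dominates `G'`: for every assignment of finite cardinalities to
the visible variables, every distribution realizable by `G'` is realizable by `G`. -/
def pDAG.ObsDominates {V L L' : Type} [Fintype V] [Fintype L] [Fintype L']
    [DecidableEq V] [DecidableEq L] [DecidableEq L']
    (G : pDAG V L) (G' : pDAG V L') : Prop :=
  ∀ (c : V → ℕ) (P : ((v : V) → Fin (c v)) → ℝ), G'.Realizable c P → G.Realizable c P

/-- An mDAG: a DAG on the node type `V` together with a simplicial complex on `V`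
(a family of finite subsets containing all singletons and closed under subsets). -/
structure mDAG (V : Type) where
  edge : V → V → Prop
  acyclic : ∃ rank : V → ℕ, ∀ a b, edge a b → rank a < rank b
  faces : Finset (Finset V)
  singleton_mem : ∀ v : V, {v} ∈ faces
  down_closed : ∀ A B : Finset V, A ⊆ B → B ∈ faces → A ∈ faces

namespace mDAG

variable {V : Type}

/-- A facet is an inclusion-maximal face of the simplicial complex. -/
def IsFacet (G : mDAG V) (A : Finset V) : Prop :=
  A ∈ G.faces ∧ ∀ B ∈ G.faces, A ⊆ B → A = B

/-- An mDAG is confounder-free if every facet of its simplicial complex is a singleton. -/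
def ConfounderFree (G : mDAG V) : Prop :=
  ∀ A : Finset V, G.IsFacet A → ∃ v : V, A = {v}

/-- An mDAG is directed-edge-free if its directed structure has no edges. -/
def DirectedEdgeFree (G : mDAG V) : Prop :=
  ∀ a b : V, ¬ G.edge a b

/-- `G` structurally dominates `G'` if the directed edges of `G'` are a subset of those
of `G` and the simplicial complex of `G'` is contained in that of `G`. -/
def StructDominates (G G' : mDAG V) : Prop :=
  (∀ a b : V, G'.edge a b → G.edge a b) ∧ G'.faces ⊆ G.faces

/-- The type of facets of an mDAG. -/
def Facets (G : mDAG V) : Type := {A : Finset V // G.IsFacet A}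

noncomputable instance instFintypeFacets [Fintype V] [DecidableEq V] (G : mDAG V) :
    Fintype G.Facets := Subtype.fintype _

noncomputable instance instDecidableEqFacets (G : mDAG V) :
    DecidableEq G.Facets := Classical.decEq _

/-- The canonical pDAG of an mDAG: the visible nodes carry the directed structure, and
there is one exogenous latent node per facet, whose children are exactly the members
of that facet. -/
def canon (G : mDAG V) : pDAG V G.Facets where
  edge a b :=
    match a, b with
    | Sum.inl u, Sum.inl v => G.edge u v
    | Sum.inr A, Sum.inl v => v ∈ A.1
    | _, Sum.inr _ => False
  acyclic := by
    obtain ⟨r, hr⟩ := G.acyclic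
    refine ⟨Sum.elim (fun v => r v + 1) (fun _ => 0), ?_⟩
    rintro (u | A) (v | B) h
    · simpa using hr u v h
    · exact h.elim
    · simp
    · exact h.elim

/-- Realizability of a distribution over the visible variables by an mDAG (via its
canonical pDAG). -/
def Realizable [Fintype V] [DecidableEq V] (G : mDAG V) (c : V → ℕ)
    (P : ((v : V) → Fin (c v)) → ℝ) : Prop :=
  G.canon.Realizable c P

/-- Observational dominance of mDAGs: for every assignment of finite cardinalities to
the visible nodes, every distribution realizable by `G'` is realizable by `G`. -/
def ObsDominates [Fintype V] [DecidableEq V] (G G' : mDAG V) : Prop :=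
  ∀ (c : V → ℕ) (P : ((v : V) → Fin (c v)) → ℝ), G'.Realizable c P → G.Realizable c P

/-- Observational equivalence of mDAGs. -/
def ObsEquiv [Fintype V] [DecidableEq V] (G G' : mDAG V) : Prop :=
  ∀ (c : V → ℕ) (P : ((v : V) → Fin (c v)) → ℝ), G.Realizable c P ↔ G'.Realizable c P

/-- Consistency with the fixed nodal ordering given by the order on `V`:
a later node is never an ancestor of an earlier node. -/
def OrderConsistent [LT V] (G : mDAG V) : Prop :=
  ∀ i j : V, i < j → ¬ Relation.TransGen G.edge j i

/-- `G'` is obtained from `G` by relabelling the nodes with the permutation `π`. -/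
def IsRelabel (π : Equiv.Perm V) (G G' : mDAG V) : Prop :=
  (∀ a b : V, G'.edge (π a) (π b) ↔ G.edge a b) ∧
  G'.faces = G.faces.image (Finset.image π)

/-- Adjacency in the skeleton of an mDAG: a directed edge in either direction, or
joint membership in some face of the simplicial complex. -/
def skelAdj (G : mDAG V) (u w : V) : Prop :=
  G.edge u w ∨ G.edge w u ∨ ∃ A ∈ G.faces, u ∈ A ∧ w ∈ A

end mDAG

/-! ## d-separation and e-separation -/

/-- Undirected adjacency underlying a directed graph. -/
def AdjRel {N : Type} (E : N → N → Prop) (a b : N) : Prop := E a b ∨ E b a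

/-- The middle node `y` of a consecutive triple `(x, y, z)` of a path does not block the
path given the conditioning set `C`: if `y` is a collider it has a descendant in `C`
(possibly itself), and if it is a non-collider it is not in `C`. -/
def ActiveTriple {N : Type} (E : N → N → Prop) (C : Set N) (x y z : N) : Prop :=
  ((E x y ∧ E z y) ∧ ∃ d ∈ C, Relation.ReflTransGen E y d) ∨
  (¬(E x y ∧ E z y) ∧ y ∉ C)

/-- Every consecutive triple of the path is active given the conditioning set `C`. -/
def TriplesActive {N : Type} (E : N → N → Prop) (C : Set N) : List N → Prop
  | x :: y :: z :: rest => ActiveTriple E C x y z ∧ TriplesActive E C (y :: z :: rest)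
  | _ => True

/-- `A` and `B` are d-connected given `C`: there is a (repetition-free, undirected)
path from a node of `A` to a node of `B` that is not blocked by `C`. -/
def DConnected {N : Type} (E : N → N → Prop) (A B C : Set N) : Prop :=
  ∃ p : List N, p.Chain' (AdjRel E) ∧ p.Nodup ∧
    (∃ a ∈ A, p.head? = some a) ∧ (∃ b ∈ B, p.getLast? = some b) ∧
    TriplesActive E C p

/-- d-separation: every undirected path from `A` to `B` is blocked by `C`. -/
def DSeparated {N : Type} (E : N → N → Prop) (A B C : Set N) : Prop :=
  ¬ DConnected E A B C

namespace mDAG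

variable {V : Type}

/-- d-separation of sets of (visible) nodes of an mDAG, evaluated in its canonical pDAG. -/
def dsep (G : mDAG V) (A B C : Set V) : Prop :=
  DSeparated G.canon.edge (Sum.inl '' A) (Sum.inl '' B) (Sum.inl '' C)

end mDAG

/-- The edge relation of a pDAG after deletion of the visible nodes in `D`. -/
def delEdge {V L : Type} (E : V ⊕ L → V ⊕ L → Prop) (D : Set V) (a b : V ⊕ L) : Prop :=
  E a b ∧ (∀ v, a = Sum.inl v → v ∉ D) ∧ (∀ v, b = Sum.inl v → v ∉ D)

namespace mDAG

variable {V : Type}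

/-- e-separation: `A` and `B` are e-separated by `C` after deletion of `D` if they are
d-separated by `C` in the subgraph of the canonical pDAG obtained by deleting the nodes
in `D`. -/
def eSep (G : mDAG V) (A B C D : Set V) : Prop :=
  DSeparated (delEdge G.canon.edge D) (Sum.inl '' A) (Sum.inl '' B) (Sum.inl '' C)

end mDAG

/-! ## Conditional independence -/

/-- The probability that the variables in `S` take the values specified by `g`. -/
noncomputable def margProb {V : Type} [Fintype V] [DecidableEq V] (c : V → ℕ)
    (P : ((v : V) → Fin (c v)) → ℝ) (S : Set V) (g : (v : V) → Fin (c v)) : ℝ :=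
  ∑ x : (v : V) → Fin (c v), if ∀ v ∈ S, x v = g v then P x else 0

/-- `X_A ⊥⊥ X_B | X_C` in the distribution `P`:
`P(X_A X_B | X_C) = P(X_A | X_C) P(X_B | X_C)` whenever the conditioning event has
positive probability. -/
def CondIndep {V : Type} [Fintype V] [DecidableEq V] (c : V → ℕ)
    (P : ((v : V) → Fin (c v)) → ℝ) (A B C : Set V) : Prop :=
  ∀ g : (v : V) → Fin (c v), 0 < margProb c P C g →
    margProb c P (A ∪ B ∪ C) g * margProb c P C g
      = margProb c P (A ∪ C) g * margProb c P (B ∪ C) g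

/-! ## Districts, closures and densely connected pairs -/

namespace mDAG

variable {V : Type}

/-- One step of connection through a common face, within the node subset `S`. -/
def faceStep (G : mDAG V) (S : Set V) (x y : V) : Prop :=
  x ∈ S ∧ y ∈ S ∧ ∃ F ∈ G.faces, x ∈ F ∧ y ∈ F

/-- The district of the set `A` in the sub-mDAG induced on `S`. -/
def disIn (G : mDAG V) (S A : Set V) : Set V :=
  {w | ∃ a ∈ A, Relation.ReflTransGen (G.faceStep S) a w}

/-- The ancestors of the set `A` (including `A` itself) in the directed structure
restricted to `S`. -/
def anIn (G : mDAG V) (S A : Set V) : Set V :=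
  {w | ∃ a ∈ A, Relation.ReflTransGen (fun x y => x ∈ S ∧ y ∈ S ∧ G.edge x y) w a}

/-- The alternating sequence of district and ancestor restrictions used to define
the closure of a set of nodes. -/
def closureSeq (G : mDAG V) (A : Set V) : ℕ → Set V
  | 0 => Set.univ
  | n + 1 =>
      if n % 2 = 0 then G.disIn (G.closureSeq A n) A else G.anIn (G.closureSeq A n) A

/-- The closure of a set of nodes: the limit (intersection) of the decreasing
alternating sequence. -/
def closure (G : mDAG V) (A : Set V) : Set V := ⋂ n, G.closureSeq A n

/-- `S` is bidirected-connected: it forms a single district of the induced sub-mDAG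
on `S`. -/
def BidirConnected (G : mDAG V) (S : Set V) : Prop :=
  ∀ u ∈ S, ∀ w ∈ S, Relation.ReflTransGen (G.faceStep S) u w

/-- Two distinct nodes `v`, `w` are densely connected. -/
def DenselyConnected (G : mDAG V) (v w : V) : Prop :=
  (∃ u ∈ G.closure {w}, G.edge v u) ∨
  (∃ u ∈ G.closure {v}, G.edge w u) ∨
  G.BidirConnected (G.closure {v, w})

/-- `S` is a realizable support of the mDAG `G` at cardinalities `c`: some distribution
realizable by `G` at `c` has support exactly `S`. -/
def RealizableSupport [Fintype V] [DecidableEq V] (G : mDAG V) (c : V → ℕ)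
    (S : Set ((v : V) → Fin (c v))) : Prop :=
  ∃ P : ((v : V) → Fin (c v)) → ℝ, G.Realizable c P ∧ ∀ x, x ∈ S ↔ 0 < P x

end mDAG
section PackAux

variable {ι₁ ι₂ : Type} [Fintype ι₁]

/-- Cardinality of the packed value at `b`: product of `n` over the fiber of `φ` at `b`. -/
noncomputable def packCard (φ : ι₁ → ι₂) (n : ι₁ → ℕ) (b : ι₂) : ℕ :=
  Fintype.card ((a : {a // φ a = b}) → Fin (n a.1))

/-- Decoding a packed value into its components. -/
noncomputable def packDec (φ : ι₁ → ι₂) (n : ι₁ → ℕ) (b : ι₂) :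
    Fin (packCard φ n b) ≃ ((a : {a // φ a = b}) → Fin (n a.1)) :=
  (Fintype.equivFin _).symm

/-- Packing families along the fibers of `φ`. -/
noncomputable def packEquiv (φ : ι₁ → ι₂) (n : ι₁ → ℕ) :
    ((b : ι₂) → Fin (packCard φ n b)) ≃ ((a : ι₁) → Fin (n a)) where
  toFun x a := packDec φ n (φ a) (x (φ a)) ⟨a, rfl⟩
  invFun y b := (packDec φ n b).symm fun a => y a.1
  left_inv x := by
    funext b
    rw [Equiv.symm_apply_eq]
    funext a
    obtain ⟨a, rfl⟩ := a
    rfl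
  right_inv y := by
    funext a
    show packDec φ n (φ a) ((packDec φ n (φ a)).symm _) ⟨a, rfl⟩ = y a
    rw [Equiv.apply_symm_apply]

end PackAux

section PackInr

variable {γ α β : Type} [Fintype γ] [Fintype α]

/-- Packing along the fibers of `Sum.map id φ` over points of the form `Sum.inr b`. -/
noncomputable def packEquivInr (φ : α → β) (m : γ ⊕ α → ℕ) :
    ((b : β) → Fin (packCard (Sum.map id φ) m (Sum.inr b))) ≃
      ((a : α) → Fin (m (Sum.inr a))) where
  toFun x a := packDec (Sum.map id φ) m (Sum.inr (φ a)) (x (φ a)) ⟨Sum.inr a, rfl⟩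
  invFun y b := (packDec (Sum.map id φ) m (Sum.inr b)).symm fun a =>
    match a with
    | ⟨Sum.inl g, hp⟩ => absurd hp (by simp)
    | ⟨Sum.inr a, _⟩ => y a
  left_inv x := by
    funext b
    rw [Equiv.symm_apply_eq]
    funext a
    rcases a with ⟨g | a, hp⟩
    · exact absurd hp (by simp)
    · obtain rfl : φ a = b := by simpa using hp
      rfl
  right_inv y := by
    funext a
    show packDec (Sum.map id φ) m (Sum.inr (φ a))
        ((packDec (Sum.map id φ) m (Sum.inr (φ a))).symm _) ⟨Sum.inr a, rfl⟩ = y a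
    rw [Equiv.apply_symm_apply]

end PackInr

section Sim

variable {Vt α β : Type} [Fintype Vt] [Fintype α] [Fintype β]

/-- Latent component cardinalities used in the simulation. -/
noncomputable def simKappa (k' : α → ℕ) : Vt ⊕ α → ℕ := Sum.elim (fun _ => 1) k'

/-- Latent cardinalities of the simulating model. -/
noncomputable def simk (φ : α → β) (k' : α → ℕ) (B : β) : ℕ :=
  packCard (Sum.map id φ) (simKappa (Vt := Vt) k') (Sum.inr B)

/-- Error cardinalities of the simulating model. -/
noncomputable def sime (φ : α → β) (e' : Vt ⊕ α → ℕ) (a : Vt ⊕ β) : ℕ :=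
  packCard (Sum.map id φ) e' a

noncomputable def simdK (φ : α → β) (k' : α → ℕ) (B : β) :
    Fin (simk (Vt := Vt) φ k' B) ≃
      ((a' : {a' : Vt ⊕ α // Sum.map id φ a' = Sum.inr B}) → Fin (simKappa (Vt := Vt) k' a'.1)) :=
  packDec _ _ _

noncomputable def simdE (φ : α → β) (e' : Vt ⊕ α → ℕ) (a : Vt ⊕ β) :
    Fin (sime φ e' a) ≃ ((a' : {a' : Vt ⊕ α // Sum.map id φ a' = a}) → Fin (e' a'.1)) :=
  packDec _ _ _

noncomputable def simPE (φ : α → β) (e' : Vt ⊕ α → ℕ)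
    (PE' : (a' : Vt ⊕ α) → Fin (e' a') → ℝ) (a : Vt ⊕ β) (η : Fin (sime φ e' a)) : ℝ :=
  ∏ a' : {a' : Vt ⊕ α // Sum.map id φ a' = a}, PE' a'.1 (simdE φ e' a η a')

noncomputable def simtr (φ : α → β) (c : Vt → ℕ) (k' : α → ℕ)
    (g : (b : Vt ⊕ β) → Fin (Sum.elim c (simk (Vt := Vt) φ k') b))
    (b' : Vt ⊕ α) : Fin (Sum.elim c k' b') :=
  match b' with
  | Sum.inl u => g (Sum.inl u)
  | Sum.inr A' => simdK φ k' (φ A') (g (Sum.inr (φ A'))) ⟨Sum.inr A', rfl⟩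

noncomputable def simf (φ : α → β) (c : Vt → ℕ) (k' : α → ℕ) (e' : Vt ⊕ α → ℕ)
    (f' : (a' : Vt ⊕ α) → ((b' : Vt ⊕ α) → Fin (Sum.elim c k' b')) → Fin (e' a') →
      Fin (Sum.elim c k' a'))
    (a : Vt ⊕ β) (g : (b : Vt ⊕ β) → Fin (Sum.elim c (simk (Vt := Vt) φ k') b))
    (η : Fin (sime φ e' a)) : Fin (Sum.elim c (simk (Vt := Vt) φ k') a) :=
  match a, η with
  | Sum.inl v, η => f' (Sum.inl v) (simtr φ c k' g) (simdE φ e' (Sum.inl v) η ⟨Sum.inl v, rfl⟩)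
  | Sum.inr B, η => (simdK φ k' B).symm fun a' =>
      match a' with
      | ⟨Sum.inl u, _⟩ => Fin.mk 0 Nat.one_pos
      | ⟨Sum.inr A', hp⟩ =>
          f' (Sum.inr A') (simtr φ c k' g) (simdE φ e' (Sum.inr B) η ⟨Sum.inr A', hp⟩)

noncomputable def simEK (φ : α → β) (k' : α → ℕ) :
    ((B : β) → Fin (simk (Vt := Vt) φ k' B)) ≃ ((A' : α) → Fin (k' A')) :=
  packEquivInr φ (simKappa (Vt := Vt) k')

noncomputable def simEE (φ : α → β) (e' : Vt ⊕ α → ℕ) :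
    ((a : Vt ⊕ β) → Fin (sime φ e' a)) ≃ ((a' : Vt ⊕ α) → Fin (e' a')) :=
  packEquiv (Sum.map id φ) e'

lemma simtr_joint (φ : α → β) (c : Vt → ℕ) (k' : α → ℕ)
    (xv : (v : Vt) → Fin (c v)) (xl : (B : β) → Fin (simk (Vt := Vt) φ k' B)) :
    simtr φ c k' (jointVal c (simk (Vt := Vt) φ k') xv xl)
      = jointVal c k' xv (simEK (Vt := Vt) φ k' xl) := by
  funext b'
  cases b' with
  | inl u => rfl
  | inr A' => rfl

end Sim


lemma indicator_prod_split {n : ℕ} {ι : Type} [Fintype ι] {m : ι → ℕ}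
    (d : Fin n ≃ ((i : ι) → Fin (m i))) (x : Fin n) (t : (i : ι) → Fin (m i)) :
    (if x = d.symm t then (1:ℝ) else 0) = ∏ i, if d x i = t i then 1 else 0 := by
  by_cases hx : x = d.symm t
  · subst hx
    rw [if_pos rfl]
    simp [Equiv.apply_symm_apply]
  · rw [if_neg hx]
    have hne : d x ≠ t := by
      intro hc
      exact hx (by rw [← hc, Equiv.symm_apply_apply])
    obtain ⟨i, hi⟩ := Function.ne_iff.mp hne
    exact (Finset.prod_eq_zero (Finset.mem_univ i) (by rw [if_neg hi])).symm

section Sim2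

variable {Vt α β : Type} [Fintype Vt] [Fintype α] [Fintype β]

set_option maxHeartbeats 1000000 in
lemma simPE_isDist (φ : α → β) (e' : Vt ⊕ α → ℕ)
    (PE' : (a' : Vt ⊕ α) → Fin (e' a') → ℝ)
    (hPE' : ∀ a', IsDist (PE' a')) (a : Vt ⊕ β) : IsDist (simPE φ e' PE' a) := by
  constructor
  · intro η
    exact Finset.prod_nonneg fun a' _ => (hPE' a'.1).1 _
  · calc ∑ η : Fin (sime φ e' a), simPE φ e' PE' a η
        = ∑ t : (a' : {a' : Vt ⊕ α // Sum.map id φ a' = a}) → Fin (e' a'.1),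
            ∏ a', PE' a'.1 (t a') :=
          Fintype.sum_equiv (simdE φ e' a) _ _ (fun η => rfl)
      _ = ∏ a' : {a' : Vt ⊕ α // Sum.map id φ a' = a}, ∑ j, PE' a'.1 j := by
          rw [Finset.prod_univ_sum, Fintype.piFinset_univ]
      _ = 1 := Finset.prod_eq_one fun a' _ => (hPE' a'.1).2

set_option maxHeartbeats 1000000 in
lemma sim_key (φ : α → β) (c : Vt → ℕ) (k' : α → ℕ) (e' : Vt ⊕ α → ℕ)
    (PE' : (a' : Vt ⊕ α) → Fin (e' a') → ℝ)
    (f' : (a' : Vt ⊕ α) → ((b' : Vt ⊕ α) → Fin (Sum.elim c k' b')) → Fin (e' a') →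
      Fin (Sum.elim c k' a'))
    (xv : (v : Vt) → Fin (c v)) (xl : (B : β) → Fin (simk (Vt := Vt) φ k' B))
    (ε : (a : Vt ⊕ β) → Fin (sime φ e' a)) :
    (∏ a : Vt ⊕ β,
      (if jointVal c (simk (Vt := Vt) φ k') xv xl a
          = simf φ c k' e' f' a (jointVal c (simk (Vt := Vt) φ k') xv xl) (ε a)
        then (1:ℝ) else 0) * simPE φ e' PE' a (ε a))
    = ∏ a' : Vt ⊕ α,
      (if jointVal c k' xv (simEK (Vt := Vt) φ k' xl) a'
          = f' a' (jointVal c k' xv (simEK (Vt := Vt) φ k' xl)) (simEE φ e' ε a')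
        then (1:ℝ) else 0) * PE' a' (simEE φ e' ε a') := by
  rw [← Fintype.prod_fiberwise (Sum.map id φ) (fun a' : Vt ⊕ α =>
      (if jointVal c k' xv (simEK (Vt := Vt) φ k' xl) a'
          = f' a' (jointVal c k' xv (simEK (Vt := Vt) φ k' xl)) (simEE φ e' ε a')
        then (1:ℝ) else 0) * PE' a' (simEE φ e' ε a'))]
  refine Finset.prod_congr rfl ?_
  rintro (v | B) -
  · haveI uniq : Unique {a' : Vt ⊕ α // Sum.map id φ a' = Sum.inl v} :=
      ⟨⟨⟨Sum.inl v, rfl⟩⟩, by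
        rintro ⟨u | A', hp⟩
        · obtain rfl : u = v := by simpa using hp
          rfl
        · exact absurd hp (by simp)⟩
    have hd : (default : {a' : Vt ⊕ α // Sum.map id φ a' = Sum.inl v}) = ⟨Sum.inl v, rfl⟩ := Subsingleton.elim _ _
    simp only [simPE, simf, Finset.univ_unique, Finset.prod_singleton, hd]
    simp only [simtr_joint]
    congr 1
    exact if_congr Iff.rfl rfl rfl
  · dsimp only [simPE, simf]
    refine (congrArg (· * _) (indicator_prod_split (simdK φ k' B) _ _)).trans ?_
    beta_reduce
    rw [← Finset.prod_mul_distrib]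
    simp only [simtr_joint]
    refine Finset.prod_congr rfl ?_
    rintro ⟨u | A', hp⟩ -
    · exact absurd hp (by simp)
    · obtain rfl : φ A' = B := by simpa using hp
      rfl

end Sim2


set_option maxHeartbeats 1000000 in
/-- If the mDAG `G` structurally dominates the mDAG `G'` (on the same
node set), then `G` observationally dominates `G'`: for every assignment `c` of finite
cardinalities to the visible nodes, every probability distribution realizable by `G'`
at `c` is realizable by `G` at `c`. -/
theorem structural_dominance_implies_observational_dominance
    {V : Type} [Fintype V] [DecidableEq V] (G G' : mDAG V)
    (h : G.StructDominates G') :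
    ∀ (c : V → ℕ) (P : ((v : V) → Fin (c v)) → ℝ),
      G'.Realizable c P → G.Realizable c P := by
  intro c P hP
  obtain ⟨hDist, k', e', PE', f', hPE', hpar', hsum'⟩ := hP
  -- every facet of `G'` is contained in some facet of `G`
  have hfac : ∀ A' : G'.Facets, ∃ B : G.Facets, A'.1 ⊆ B.1 := by
    intro A'
    have hmem : A'.1 ∈ G.faces := h.2 A'.2.1
    obtain ⟨B, hB, hmax⟩ := Finset.exists_max_image (G.faces.filter (A'.1 ⊆ ·))
      Finset.card ⟨A'.1, by simp [hmem]⟩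
    simp only [Finset.mem_filter] at hB
    refine ⟨⟨B, hB.1, ?_⟩, hB.2⟩
    intro C hC hBC
    refine Finset.eq_of_subset_of_card_le hBC (hmax C ?_)
    simp only [Finset.mem_filter]
    exact ⟨hC, hB.2.trans hBC⟩
  choose φ hφ using hfac
  refine ⟨hDist, simk (Vt := V) φ k', sime φ e', simPE φ e' PE', simf φ c k' e' f',
    simPE_isDist φ e' PE' hPE', ?_, ?_⟩
  · -- the functions depend only on the parents
    rintro (v | B) g g' ε hag
    · simp only [simf]
      refine hpar' (Sum.inl v) (simtr φ c k' g) (simtr φ c k' g') _ ?_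
      rintro (u | A') hb
      · show g (Sum.inl u) = g' (Sum.inl u)
        exact hag (Sum.inl u) (h.1 u v hb)
      · show simdK φ k' (φ A') (g (Sum.inr (φ A'))) ⟨Sum.inr A', rfl⟩
            = simdK φ k' (φ A') (g' (Sum.inr (φ A'))) ⟨Sum.inr A', rfl⟩
        have hb' : v ∈ A'.1 := hb
        rw [hag (Sum.inr (φ A')) (hφ A' hb')]
    · simp only [simf]
      refine congrArg (simdK φ k' B).symm ?_
      funext a'
      rcases a' with ⟨u | A', hp⟩
      · rfl
      · show f' (Sum.inr A') (simtr φ c k' g) _ = f' (Sum.inr A') (simtr φ c k' g') _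
        refine hpar' (Sum.inr A') _ _ _ ?_
        rintro (u | A'') hb
        · exact (hb : False).elim
        · exact (hb : False).elim
  · -- the marginal distribution is `P`
    intro xv
    rw [hsum' xv]
    refine Eq.symm ?_
    calc (∑ xl : (B : G.Facets) → Fin (simk (Vt := V) φ k' B),
            ∑ ε : (a : V ⊕ G.Facets) → Fin (sime φ e' a),
            ∏ a : V ⊕ G.Facets,
              (if jointVal c (simk (Vt := V) φ k') xv xl a
                  = simf φ c k' e' f' a (jointVal c (simk (Vt := V) φ k') xv xl) (ε a)
                then (1:ℝ) else 0) * simPE φ e' PE' a (ε a))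
        = ∑ xl : (B : G.Facets) → Fin (simk (Vt := V) φ k' B),
            ∑ ε : (a : V ⊕ G.Facets) → Fin (sime φ e' a),
            ∏ a' : V ⊕ G'.Facets,
              (if jointVal c k' xv (simEK (Vt := V) φ k' xl) a'
                  = f' a' (jointVal c k' xv (simEK (Vt := V) φ k' xl)) (simEE φ e' ε a')
                then (1:ℝ) else 0) * PE' a' (simEE φ e' ε a') := by
          refine Finset.sum_congr rfl fun xl _ => Finset.sum_congr rfl fun ε _ => ?_
          exact sim_key φ c k' e' PE' f' xv xl ε
      _ = ∑ xl : (B : G.Facets) → Fin (simk (Vt := V) φ k' B),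
            ∑ ε' : (a' : V ⊕ G'.Facets) → Fin (e' a'),
            ∏ a' : V ⊕ G'.Facets,
              (if jointVal c k' xv (simEK (Vt := V) φ k' xl) a'
                  = f' a' (jointVal c k' xv (simEK (Vt := V) φ k' xl)) (ε' a')
                then (1:ℝ) else 0) * PE' a' (ε' a') := by
          refine Finset.sum_congr rfl fun xl _ => ?_
          exact Fintype.sum_equiv (simEE φ e') _ _ (fun ε => rfl)
      _ = ∑ xl' : (A' : G'.Facets) → Fin (k' A'),
            ∑ ε' : (a' : V ⊕ G'.Facets) → Fin (e' a'),
            ∏ a' : V ⊕ G'.Facets,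
              (if jointVal c k' xv xl' a' = f' a' (jointVal c k' xv xl') (ε' a')
                then (1:ℝ) else 0) * PE' a' (ε' a') :=
          Fintype.sum_equiv (simEK (Vt := V) φ k') _ _ (fun xl => rfl)
end

section
/- Let 𝔊 and 𝔊' be two confounder-free mDAGs on the same node set that are both consistent with the same fixed nodal ordering. Then 𝔊 observationally dominates 𝔊' if and only if 𝔊 structurally dominates 𝔊' (i.e., every directed edge of 𝔊' is a directed edge of 𝔊). -/
open scoped Classical

section Aux

open Sum

variable {V : Type} [Fintype V] [DecidableEq V]

/-- No self-loops in an mDAG. -/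
lemma mDAG.no_self_edge (G : mDAG V) (v : V) : ¬ G.edge v v := by
  obtain ⟨r, hr⟩ := G.acyclic
  intro h
  exact lt_irrefl _ (hr v v h)

/-- In a confounder-free mDAG, every face has at most one element. -/
lemma mDAG.face_card_le_one {G : mDAG V} (hG : G.ConfounderFree)
    {B : Finset V} (hB : B ∈ G.faces) : B.card ≤ 1 := by
  classical
  set S : Finset (Finset V) := G.faces.filter (fun C => B ⊆ C) with hS
  have hBS : B ∈ S := by simp [hS, hB]
  obtain ⟨M, hMS, hMmax⟩ := Finset.exists_max_image S (fun C => C.card) ⟨B, hBS⟩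
  have hMfaces : M ∈ G.faces := (Finset.mem_filter.1 hMS).1
  have hBM : B ⊆ M := (Finset.mem_filter.1 hMS).2
  have hfacet : G.IsFacet M := by
    refine ⟨hMfaces, fun C hC hMC => ?_⟩
    have hCS : C ∈ S := by
      simp only [hS, Finset.mem_filter]
      exact ⟨hC, hBM.trans hMC⟩
    exact Finset.eq_of_subset_of_card_le hMC (hMmax C hCS)
  obtain ⟨v, hv⟩ := hG M hfacet
  calc B.card ≤ M.card := Finset.card_le_card hBM
    _ = 1 := by simp [hv]

/-- In a confounder-free mDAG, every singleton is a facet. -/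
lemma mDAG.singleton_facet {G : mDAG V} (hG : G.ConfounderFree) (v : V) :
    G.IsFacet {v} := by
  refine ⟨G.singleton_mem v, fun C hC hvC => ?_⟩
  exact (Finset.eq_of_subset_of_card_le hvC
    (by simpa using mDAG.face_card_le_one hG hC)).symm ▸ rfl

/-- Two confounder-free mDAGs on the same node set have the same faces. -/
lemma mDAG.faces_eq_of_confounderFree {G G' : mDAG V}
    (hG : G.ConfounderFree) (hG' : G'.ConfounderFree) : G.faces = G'.faces := by
  have aux : ∀ (H H' : mDAG V), H.ConfounderFree → H'.ConfounderFree →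
      ∀ B : Finset V, B ∈ H.faces → B ∈ H'.faces := by
    intro H H' hH hH' B hB
    rcases B.eq_empty_or_nonempty with rfl | ⟨v, hv⟩
    · rcases isEmpty_or_nonempty V with hV | hV
      · exfalso
        have hfacet : H.IsFacet ∅ :=
          ⟨hB, fun C _ _ => (Finset.eq_empty_of_isEmpty C).symm⟩
        obtain ⟨v, _⟩ := hH ∅ hfacet
        exact hV.false v
      · obtain ⟨w⟩ := ‹Nonempty V›
        exact H'.down_closed ∅ {w} (Finset.empty_subset _) (H'.singleton_mem w)
    · have hcard : B.card ≤ 1 := mDAG.face_card_le_one hH hB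
      have : B = {v} := by
        apply Finset.eq_singleton_iff_unique_mem.2
        refine ⟨hv, fun w hw => ?_⟩
        by_contra hne
        have : 2 ≤ B.card := Finset.one_lt_card.2 ⟨w, hw, v, hv, hne⟩
        omega
      rw [this]
      exact H'.singleton_mem v
  ext B
  exact ⟨aux G G' hG hG' B, aux G' G hG' hG B⟩

end Aux
section Core

open Sum

variable {V : Type} [Fintype V] [DecidableEq V]

/-- Cardinality assignment: `2` on `a` and `b`, `1` elsewhere. -/
def ccc (a b : V) : V → ℕ := fun v => if v = a ∨ v = b then 2 else 1

lemma ccc_pos (a b v : V) : 0 < ccc a b v := by unfold ccc; split_ifs <;> omega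

lemma ccc_a (a b : V) : ccc a b a = 2 := by simp [ccc]

lemma ccc_b (a b : V) : ccc a b b = 2 := by simp [ccc]

lemma ccc_other {a b v : V} (h1 : v ≠ a) (h2 : v ≠ b) : ccc a b v = 1 := by
  simp [ccc, h1, h2]

lemma fin_eq_of_card_one {n : ℕ} (h : n = 1) (x y : Fin n) : x = y := by
  subst h; exact Subsingleton.elim x y

/-- The perfectly-correlated distribution on `X_a, X_b`. -/
noncomputable def PPc (a b : V) : ((v : V) → Fin (ccc a b v)) → ℝ := fun xv =>
  if (xv a : ℕ) = (xv b : ℕ) then 2⁻¹ else 0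

/-- The assignment of visible values with value `α` at `a`, `β` at `b`, `0` elsewhere. -/
def xvab (a b : V) (α β : Fin 2) : (v : V) → Fin (ccc a b v) := fun v =>
  ⟨if v = a then α.1 else if v = b then β.1 else 0, by
    unfold ccc
    split_ifs with h1 h2 h3 h4 h5 <;> first | exact α.isLt | exact β.isLt | omega | tauto⟩

lemma xvab_a (a b : V) (α β : Fin 2) : ((xvab a b α β a : Fin (ccc a b a)) : ℕ) = α.1 := by
  simp [xvab]

lemma xvab_b {a b : V} (hab : a ≠ b) (α β : Fin 2) :
    ((xvab a b α β b : Fin (ccc a b b)) : ℕ) = β.1 := by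
  simp [xvab, Ne.symm hab]

lemma xvab_other {a b v : V} (h1 : v ≠ a) (h2 : v ≠ b) (α β : Fin 2) :
    ((xvab a b α β v : Fin (ccc a b v)) : ℕ) = 0 := by
  simp [xvab, h1, h2]

lemma PPc_xvab {a b : V} (hab : a ≠ b) (α β : Fin 2) :
    PPc a b (xvab a b α β) = if α.1 = β.1 then (2:ℝ)⁻¹ else 0 := by
  unfold PPc
  rw [xvab_a, xvab_b hab]

/-- `PPc` is a probability distribution. -/
lemma PPc_isDist {a b : V} (hab : a ≠ b) : IsDist (PPc a b) := by
  constructor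
  · intro x
    unfold PPc
    split_ifs <;> norm_num
  · have e := Fintype.sum_bijective (fun p : Fin 2 × Fin 2 => xvab a b p.1 p.2)
      ?_ (fun p : Fin 2 × Fin 2 => if p.1.1 = p.2.1 then (2:ℝ)⁻¹ else 0) (PPc a b)
      (fun p => (PPc_xvab hab p.1 p.2).symm)
    · rw [← e, Fintype.sum_prod_type]
      simp [Fin.sum_univ_two]
      norm_num
    constructor
    · intro p q hpq
      have ha := congrArg (fun xv => ((xv a : Fin (ccc a b a)) : ℕ)) hpq
      have hb := congrArg (fun xv => ((xv b : Fin (ccc a b b)) : ℕ)) hpq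
      simp only [xvab_a, xvab_b hab] at ha hb
      exact Prod.ext (Fin.ext ha) (Fin.ext hb)
    · intro xv
      refine ⟨(Fin.cast (ccc_a a b) (xv a), Fin.cast (ccc_b a b) (xv b)), ?_⟩
      funext v
      apply Fin.ext
      by_cases h1 : v = a
      · subst h1; simp [xvab]
      · by_cases h2 : v = b
        · subst h2; simp [xvab, Ne.symm (show a ≠ v from fun h => h1 h.symm)]
        · have h3 : (xv v : ℕ) < 1 := lt_of_lt_of_le (xv v).isLt (le_of_eq (ccc_other h1 h2))
          simp [xvab, h1, h2]
          omega

end Core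
section Construct

open Sum

variable {V : Type} [Fintype V] [DecidableEq V]

lemma unif_isDist (n : ℕ) (hn : n ≠ 0) : IsDist (fun _ : Fin n => ((n : ℝ))⁻¹) := by
  constructor
  · intro x; positivity
  · rw [Finset.sum_const, Finset.card_univ, Fintype.card_fin, nsmul_eq_mul]
    field_simp

/-- The structural functions realizing the perfectly-correlated distribution. -/
def consf (G' : mDAG V) (a b : V) :
    (x : V ⊕ G'.Facets) → ((y : V ⊕ G'.Facets) → Fin (Sum.elim (ccc a b) (fun _ => 1) y)) →
      Fin (Sum.elim (ccc a b) (fun _ => 1) x) → Fin (Sum.elim (ccc a b) (fun _ => 1) x)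
  | Sum.inl v => fun g ε =>
      if h : v = b then
        ⟨(g (Sum.inl a)).1, by subst h; simpa [ccc] using (g (Sum.inl a)).isLt⟩
      else ε
  | Sum.inr _ => fun _ ε => ε

/-- If `G'` has the edge `a → b`, then the perfectly-correlated distribution is
realizable by `G'`. -/
lemma PPc_realizable (G' : mDAG V) {a b : V} (hab : a ≠ b) (hedge : G'.edge a b) :
    G'.Realizable (ccc a b) (PPc a b) := by
  classical
  refine ⟨PPc_isDist hab, fun _ => 1, Sum.elim (ccc a b) (fun _ => 1),
    fun x _ => ((Sum.elim (ccc a b) (fun _ => 1) x : ℕ) : ℝ)⁻¹,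
    consf G' a b, ?_, ?_, ?_⟩
  · rintro (v | A)
    · exact unif_isDist _ (ccc_pos a b v).ne'
    · exact unif_isDist 1 one_ne_zero
  · rintro (v | A) g g' ε hgg
    · show consf G' a b (Sum.inl v) g ε = consf G' a b (Sum.inl v) g' ε
      unfold consf
      by_cases h : v = b
      · have hpar : g (Sum.inl a) = g' (Sum.inl a) := by
          apply hgg
          show G'.edge a v
          rw [h]; exact hedge
        simp only [h, dif_pos]
        congr 1
        rw [hpar]
      · simp [h]; rfl
    · rfl
  · intro xv
    rw [Fintype.sum_unique]
    set J : (y : V ⊕ G'.Facets) → Fin (Sum.elim (ccc a b) (fun _ => 1) y) :=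
      jointVal (ccc a b) (fun _ => 1) xv default with hJ
    rw [← Fintype.prod_sum (fun (x : V ⊕ G'.Facets) (εx : Fin (Sum.elim (ccc a b) (fun _ => 1) x)) =>
      (if J x = consf G' a b x J εx then (1:ℝ) else 0) *
        ((Sum.elim (ccc a b) (fun _ => 1) x : ℕ) : ℝ)⁻¹)]
    rw [Fintype.prod_sum_type]
    have hinr : (∏ A : G'.Facets, ∑ εx : Fin (Sum.elim (ccc a b) (fun _ => 1) (Sum.inr A)),
        (if J (Sum.inr A) = consf G' a b (Sum.inr A) J εx then (1:ℝ) else 0) *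
          ((Sum.elim (ccc a b) (fun _ => 1) (Sum.inr A) : ℕ) : ℝ)⁻¹) = 1 := by
      apply Finset.prod_eq_one
      intro A _
      haveI : Unique (Fin (Sum.elim (ccc a b) (fun _ => 1) (Sum.inr A))) :=
        inferInstanceAs (Unique (Fin 1))
      rw [Fintype.sum_unique]
      have hd : J (Sum.inr A) = default := Subsingleton.elim (α := Fin 1) _ _
      simp [consf, hd]
    rw [hinr, mul_one]
    have hinl : ∀ v : V, (∑ εx : Fin (Sum.elim (ccc a b) (fun _ => 1) (Sum.inl v : V ⊕ G'.Facets)),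
        (if J (Sum.inl v : V ⊕ G'.Facets) = consf G' a b (Sum.inl v : V ⊕ G'.Facets) J εx then (1:ℝ) else 0) *
          ((Sum.elim (ccc a b) (fun _ => 1) (Sum.inl v : V ⊕ G'.Facets) : ℕ) : ℝ)⁻¹)
        = if v = b then (if ((xv v : ℕ) = (xv a : ℕ)) then 1 else 0)
          else if v = a then 2⁻¹ else 1 := by
      intro v
      by_cases h : v = b
      · subst h
        have hJa : J (Sum.inl a) = xv a := rfl
        have hJv : J (Sum.inl v) = xv v := rfl
        have hcf : ∀ εx : Fin (Sum.elim (ccc a v) (fun _ : G'.Facets => 1) (Sum.inl v : V ⊕ G'.Facets)),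
            consf G' a v (Sum.inl v : V ⊕ G'.Facets) J εx
            = ⟨(J (Sum.inl a)).1, by simpa [ccc] using (J (Sum.inl a)).isLt⟩ := by
          intro εx
          simp [consf]
        simp only [hcf, Fin.ext_iff, hJa, hJv]
        rw [Finset.sum_const, Finset.card_univ]
        have hcard : Fintype.card (Fin (Sum.elim (ccc a v) (fun _ : G'.Facets => 1)
            (Sum.inl v : V ⊕ G'.Facets))) = 2 := by simp [ccc]
        have hval : ((Sum.elim (ccc a v) (fun _ : G'.Facets => 1)
            (Sum.inl v : V ⊕ G'.Facets)) : ℕ) = 2 := by simp [ccc]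
        rw [hcard]
        simp only [hval, Fin.ext_iff, Fin.val_mk]
        simp only [if_true]
        split_ifs <;> simp_all [nsmul_eq_mul, Fin.ext_iff] <;> norm_num
      · have hcf : ∀ εx, consf G' a b (Sum.inl v : V ⊕ G'.Facets) J εx = εx := by
          intro εx; simp [consf, h]; rfl
        simp only [hcf]
        have hJv : J (Sum.inl v) = xv v := rfl
        rw [hJv]
        rw [Finset.sum_congr rfl (fun εx _ => by rw [ite_mul, one_mul, zero_mul])]
        erw [Fintype.sum_ite_eq]
        simp only [Finset.mem_univ, if_true, h, if_false]
        by_cases h2 : v = a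
        · subst h2; simp [ccc_a]
        · rw [show ((Sum.elim (ccc a b) (fun _ => 1) (Sum.inl v : V ⊕ G'.Facets)) : ℕ) = 1
            from ccc_other h2 h]
          simp [h2]
    rw [Finset.prod_congr rfl (fun v _ => hinl v)]
    rw [← Finset.mul_prod_erase Finset.univ _ (Finset.mem_univ a)]
    rw [← Finset.mul_prod_erase (Finset.univ.erase a) _
      (Finset.mem_erase.2 ⟨Ne.symm hab, Finset.mem_univ b⟩)]
    rw [Finset.prod_eq_one (by
      intro v hv
      rw [Finset.mem_erase, Finset.mem_erase] at hv
      simp [hv.1, hv.2.1] : ∀ v ∈ (Finset.univ.erase a).erase b,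
        (if v = b then (if ((xv v : ℕ) = (xv a : ℕ)) then (1:ℝ) else 0)
          else if v = a then 2⁻¹ else 1) = 1)]
    have qa : (if a = b then (if ((xv a : ℕ) = (xv a : ℕ)) then (1:ℝ) else 0)
        else if a = a then 2⁻¹ else 1) = 2⁻¹ := by simp [hab]
    have qb : (if b = b then (if ((xv b : ℕ) = (xv a : ℕ)) then (1:ℝ) else 0)
        else if b = a then 2⁻¹ else 1) = if ((xv b : ℕ) = (xv a : ℕ)) then (1:ℝ) else 0 := by
      simp
    rw [qa, qb]
    unfold PPc
    by_cases hx : ((xv a : ℕ) = (xv b : ℕ))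
    · rw [if_pos hx, if_pos hx.symm]; norm_num
    · rw [if_neg hx, if_neg (fun hh => hx hh.symm)]; ring

end Construct
section Transport

open Sum

variable {V : Type} [Fintype V] [DecidableEq V]

lemma facet_iff {G G' : mDAG V} (h : G'.faces = G.faces) (A : Finset V) :
    G'.IsFacet A ↔ G.IsFacet A := by
  unfold mDAG.IsFacet; rw [h]

/-- Transport a facet along an equality of simplicial complexes. -/
def facetTo {G G' : mDAG V} (h : G'.faces = G.faces) (B : G'.Facets) : G.Facets :=
  ⟨B.1, (facet_iff h B.1).1 B.2⟩

/-- Transport a facet along an equality of simplicial complexes, backwards. -/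
def facetTo' {G G' : mDAG V} (h : G'.faces = G.faces) (A : G.Facets) : G'.Facets :=
  ⟨A.1, (facet_iff h A.1).2 A.2⟩

/-- Structural dominance implies observational dominance (the faces being equal). -/
lemma realizable_mono (G G' : mDAG V) (hfaces : G'.faces = G.faces)
    (hedge : ∀ x y : V, G'.edge x y → G.edge x y) (c : V → ℕ)
    (P : ((v : V) → Fin (c v)) → ℝ) (h : G'.Realizable c P) : G.Realizable c P := by
  classical
  obtain ⟨hPdist, k', e', PE', f', hPE', hloc', hsum'⟩ := h
  refine ⟨hPdist, fun A => k' (facetTo' hfaces A),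
    fun x => e' (Sum.map id (facetTo' hfaces) x),
    fun x => PE' (Sum.map id (facetTo' hfaces) x),
    fun x => match x with
      | Sum.inl v => fun g ε => f' (Sum.inl v)
          (jointVal c k' (fun u => g (Sum.inl u)) (fun B => g (Sum.inr (facetTo hfaces B)))) ε
      | Sum.inr A => fun g ε => f' (Sum.inr (facetTo' hfaces A))
          (jointVal c k' (fun u => g (Sum.inl u)) (fun B => g (Sum.inr (facetTo hfaces B)))) ε,
    ?_, ?_, ?_⟩
  · intro x
    exact hPE' (Sum.map id (facetTo' hfaces) x)
  · rintro (v | A) g g2 ε hagree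
    · apply hloc' (Sum.inl v)
      rintro (u | B) hy'
      · have := hagree (Sum.inl u) (hedge u v hy')
        show jointVal c k' _ _ (Sum.inl u) = jointVal c k' _ _ (Sum.inl u)
        simp only [jointVal]
        rw [this]
      · have := hagree (Sum.inr (facetTo hfaces B)) hy'
        show jointVal c k' _ _ (Sum.inr B) = jointVal c k' _ _ (Sum.inr B)
        simp only [jointVal]
        rw [this]
    · apply hloc' (Sum.inr (facetTo' hfaces A))
      rintro (u | B) hy' <;> exact (hy' : False).elim
  · intro xv
    rw [hsum' xv]
    symm
    apply Fintype.sum_bijective (fun (xl : (A : G.Facets) → Fin (k' (facetTo' hfaces A)))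
        (B : G'.Facets) => xl (facetTo hfaces B))
    · exact (Equiv.mk (fun xl B => xl (facetTo hfaces B)) (fun xl' A => xl' (facetTo' hfaces A))
        (fun xl => funext fun A => rfl) (fun xl' => funext fun B => rfl)).bijective
    intro xl
    apply Fintype.sum_bijective (fun (ε : (x : V ⊕ G.Facets) → Fin (e' (Sum.map id (facetTo' hfaces) x)))
        (x' : V ⊕ G'.Facets) => (match x' with
          | Sum.inl v => ε (Sum.inl v)
          | Sum.inr B => ε (Sum.inr (facetTo hfaces B)) : Fin (e' x')))
    · exact (Equiv.mk _ (fun (ε' : (x' : V ⊕ G'.Facets) → Fin (e' x'))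
          (x : V ⊕ G.Facets) => (ε' (Sum.map id (facetTo' hfaces) x) : Fin (e' (Sum.map id (facetTo' hfaces) x))))
        (fun ε => funext fun x => by rcases x with v | A <;> rfl)
        (fun ε' => funext fun x' => by rcases x' with v | B <;> rfl)).bijective
    intro ε
    apply Fintype.prod_bijective (Sum.map id (facetTo' hfaces))
    · exact (Equiv.mk (Sum.map id (facetTo' hfaces)) (Sum.map id (facetTo hfaces))
        (fun x => by rcases x with v | A <;> rfl)
        (fun x' => by rcases x' with v | B <;> rfl)).bijective
    rintro (v | A) <;> rfl

end Transport
section NotRealizable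

open Sum

variable {V : Type} [Fintype V] [DecidableEq V]

/-- Local weight attached to the visible node `v` (with private facet `Av`). -/
noncomputable def W1g (c : V → ℕ) {L : Type} [DecidableEq L] (k : L → ℕ) (e : V ⊕ L → ℕ)
    (PE : (x : V ⊕ L) → Fin (e x) → ℝ)
    (f : (x : V ⊕ L) → ((y : V ⊕ L) → Fin (Sum.elim c k y)) → Fin (e x) → Fin (Sum.elim c k x))
    (J0 : (y : V ⊕ L) → Fin (Sum.elim c k y))
    (v : V) (Av : L) (ξ : Fin (c v)) (κ : Fin (k Av)) : ℝ :=
  ∑ εv : Fin (e (Sum.inl v)),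
    (if (ξ : Fin (Sum.elim c k (Sum.inl v))) =
        f (Sum.inl v) (Function.update J0 (Sum.inr Av) κ) εv then (1:ℝ) else 0) *
      PE (Sum.inl v) εv

/-- Local weight attached to the latent node `Av`. -/
noncomputable def W2g (c : V → ℕ) {L : Type} [DecidableEq L] (k : L → ℕ) (e : V ⊕ L → ℕ)
    (PE : (x : V ⊕ L) → Fin (e x) → ℝ)
    (f : (x : V ⊕ L) → ((y : V ⊕ L) → Fin (Sum.elim c k y)) → Fin (e x) → Fin (Sum.elim c k x))
    (J0 : (y : V ⊕ L) → Fin (Sum.elim c k y))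
    (Av : L) (κ : Fin (k Av)) : ℝ :=
  ∑ εF : Fin (e (Sum.inr Av)),
    (if κ = f (Sum.inr Av) J0 εF then (1:ℝ) else 0) * PE (Sum.inr Av) εF

/-- Total local weight of a visible node together with its private facet. -/
noncomputable def Sdg (c : V → ℕ) {L : Type} [DecidableEq L] (k : L → ℕ) (e : V ⊕ L → ℕ)
    (PE : (x : V ⊕ L) → Fin (e x) → ℝ)
    (f : (x : V ⊕ L) → ((y : V ⊕ L) → Fin (Sum.elim c k y)) → Fin (e x) → Fin (Sum.elim c k x))
    (J0 : (y : V ⊕ L) → Fin (Sum.elim c k y))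
    (v : V) (Av : L) (ξ : Fin (c v)) : ℝ :=
  ∑ κ : Fin (k Av), W1g c k e PE f J0 v Av ξ κ * W2g c k e PE f J0 Av κ

lemma PPc_not_realizable (G : mDAG V) (hG : G.ConfounderFree) {a b : V} (hab : a ≠ b)
    (hba : ¬ G.edge a b) (hbb : ¬ G.edge b a) :
    ¬ G.Realizable (ccc a b) (PPc a b) := by
  classical
  rintro ⟨hPdist, k, e, PE, f, hPE, hloc, hsum⟩
  -- the facets are exactly the singletons
  have φbij : Function.Bijective (fun v : V => (⟨{v}, mDAG.singleton_facet hG v⟩ : G.Facets)) := by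
    constructor
    · intro u w huw
      have := congrArg (fun A : G.Facets => A.1) huw
      simpa using this
    · intro A
      obtain ⟨w, hw⟩ := hG A.1 A.2
      exact ⟨w, Subtype.ext hw.symm⟩
  set φe : V ≃ G.Facets :=
    Equiv.ofBijective (fun v : V => (⟨{v}, mDAG.singleton_facet hG v⟩ : G.Facets)) φbij with hφe
  have hlat : ∀ (A : G.Facets) (v : V), v ∈ A.1 → A = φe v := by
    intro A v hv
    obtain ⟨w, hw⟩ := hG A.1 A.2
    have hvw : v = w := by rw [hw] at hv; exact Finset.mem_singleton.1 hv
    apply Subtype.ext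
    show A.1 = {v}
    rw [hw, hvw]
  have hparA : ∀ u, G.edge u a → (u ≠ a ∧ u ≠ b) :=
    fun u hu => ⟨fun h => G.no_self_edge a (h ▸ hu), fun h => hbb (h ▸ hu)⟩
  have hparB : ∀ u, G.edge u b → (u ≠ a ∧ u ≠ b) :=
    fun u hu => ⟨fun h => hba (h ▸ hu), fun h => G.no_self_edge b (h ▸ hu)⟩
  set x0 : (v : V) → Fin (ccc a b v) := fun v => ⟨0, ccc_pos a b v⟩ with hx0
  -- degenerate case: some latent cardinality is zero
  by_cases hk : ∀ A : G.Facets, k A ≠ 0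
  swap
  · push_neg at hk
    obtain ⟨A0, hA0⟩ := hk
    haveI hempty : IsEmpty ((l : G.Facets) → Fin (k l)) :=
      ⟨fun xl => Fin.elim0 (Fin.cast hA0 (xl A0))⟩
    have h0 : PPc a b (xvab a b 0 0) = 0 := by
      rw [hsum, Finset.univ_eq_empty, Finset.sum_empty]
    rw [PPc_xvab hab] at h0
    norm_num at h0
  -- main case
  set xl0 : (l : G.Facets) → Fin (k l) := fun A => ⟨0, Nat.pos_of_ne_zero (hk A)⟩ with hxl0
  set J0 : (y : V ⊕ G.Facets) → Fin (Sum.elim (ccc a b) k y) :=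
    jointVal (ccc a b) k x0 xl0 with hJ0
  have key : ∀ xv, PPc a b xv = ∏ v : V, Sdg (ccc a b) k e PE f J0 v (φe v) (xv v) := by
    intro xv
    rw [hsum xv]
    have st1 : ∀ xl : (l : G.Facets) → Fin (k l),
        (∑ ε : (x : V ⊕ G.Facets) → Fin (e x), ∏ x : V ⊕ G.Facets,
          (if jointVal (ccc a b) k xv xl x = f x (jointVal (ccc a b) k xv xl) (ε x)
            then (1:ℝ) else 0) * PE x (ε x))
        = ∏ x : V ⊕ G.Facets, ∑ εx : Fin (e x),
            (if jointVal (ccc a b) k xv xl x = f x (jointVal (ccc a b) k xv xl) εx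
              then (1:ℝ) else 0) * PE x εx := by
      intro xl
      exact (Fintype.prod_sum (fun (x : V ⊕ G.Facets) (εx : Fin (e x)) =>
        (if jointVal (ccc a b) k xv xl x = f x (jointVal (ccc a b) k xv xl) εx
          then (1:ℝ) else 0) * PE x εx)).symm
    rw [Finset.sum_congr rfl (fun xl _ => st1 xl)]
    have st2 : ∀ xl : (l : G.Facets) → Fin (k l),
        (∏ x : V ⊕ G.Facets, ∑ εx : Fin (e x),
          (if jointVal (ccc a b) k xv xl x = f x (jointVal (ccc a b) k xv xl) εx
            then (1:ℝ) else 0) * PE x εx)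
        = ∏ v : V, W1g (ccc a b) k e PE f J0 v (φe v) (xv v) (xl (φe v)) *
            W2g (ccc a b) k e PE f J0 (φe v) (xl (φe v)) := by
      intro xl
      rw [Fintype.prod_sum_type]
      rw [← Equiv.prod_comp φe (fun A : G.Facets => ∑ εx : Fin (e (Sum.inr A)),
        (if jointVal (ccc a b) k xv xl (Sum.inr A) = f (Sum.inr A) (jointVal (ccc a b) k xv xl) εx
          then (1:ℝ) else 0) * PE (Sum.inr A) εx)]
      rw [← Finset.prod_mul_distrib]
      apply Finset.prod_congr rfl
      intro v _
      congr 1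
      · simp only [W1g]
        apply Finset.sum_congr rfl
        intro εv _
        by_cases hv : v = a ∨ v = b
        · have hf : f (Sum.inl v) (jointVal (ccc a b) k xv xl) εv
              = f (Sum.inl v) (Function.update J0 (Sum.inr (φe v)) (xl (φe v))) εv := by
            apply hloc
            rintro (u | A) hy
            · have hu : u ≠ a ∧ u ≠ b := by
                rcases hv with rfl | rfl
                · exact hparA u hy
                · exact hparB u hy
              exact fin_eq_of_card_one (ccc_other hu.1 hu.2) _ _
            · have hA : A = φe v := hlat A v hy
              subst hA
              refine Eq.trans ?_ (Function.update_self (β := fun y => Fin (Sum.elim (ccc a b) k y)) _ _ _).symm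
              rfl
          have hJv : jointVal (ccc a b) k xv xl (Sum.inl v) = xv v := rfl
          rw [hJv, hf]; congr
        · have hccv : ccc a b v = 1 := ccc_other (fun h => hv (Or.inl h)) (fun h => hv (Or.inr h))
          rw [if_pos (fin_eq_of_card_one (n := Sum.elim (ccc a b) k (Sum.inl v)) hccv _ _)]; congr 1; exact (if_pos (fin_eq_of_card_one (n := Sum.elim (ccc a b) k (Sum.inl v)) hccv _ _)).symm
      · simp only [W2g]
        apply Finset.sum_congr rfl
        intro εF _
        have hf2 : f (Sum.inr (φe v)) (jointVal (ccc a b) k xv xl) εF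
            = f (Sum.inr (φe v)) J0 εF := by
          apply hloc
          rintro (u | B) hy <;> exact (hy : False).elim
        have hJr : jointVal (ccc a b) k xv xl (Sum.inr (φe v)) = xl (φe v) := rfl
        rw [hJr, hf2]; congr
    rw [Finset.sum_congr rfl (fun xl _ => st2 xl)]
    rw [← Equiv.sum_comp (Equiv.piCongrLeft (fun A : G.Facets => Fin (k A)) φe)
      (fun xl : (l : G.Facets) → Fin (k l) =>
        ∏ v : V, W1g (ccc a b) k e PE f J0 v (φe v) (xv v) (xl (φe v)) *
          W2g (ccc a b) k e PE f J0 (φe v) (xl (φe v)))]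
    have st4 : ∀ y : (v : V) → Fin (k (φe v)),
        (∏ v : V, W1g (ccc a b) k e PE f J0 v (φe v) (xv v)
            (((Equiv.piCongrLeft (fun A : G.Facets => Fin (k A)) φe) y) (φe v)) *
          W2g (ccc a b) k e PE f J0 (φe v)
            (((Equiv.piCongrLeft (fun A : G.Facets => Fin (k A)) φe) y) (φe v)))
        = ∏ v : V, W1g (ccc a b) k e PE f J0 v (φe v) (xv v) (y v) *
            W2g (ccc a b) k e PE f J0 (φe v) (y v) := by
      intro y
      apply Finset.prod_congr rfl
      intro v _
      rw [Equiv.piCongrLeft_apply_apply]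
    rw [Finset.sum_congr rfl (fun y _ => st4 y)]
    exact (Fintype.prod_sum (fun (v : V) (κ : Fin (k (φe v))) =>
      W1g (ccc a b) k e PE f J0 v (φe v) (xv v) κ *
        W2g (ccc a b) k e PE f J0 (φe v) κ)).symm
  -- conclude: the distribution would factorize
  have hprod : ∀ α β : Fin 2, PPc a b (xvab a b α β)
      = Sdg (ccc a b) k e PE f J0 a (φe a) (xvab a b α β a) *
        (Sdg (ccc a b) k e PE f J0 b (φe b) (xvab a b α β b) *
          ∏ v ∈ (Finset.univ.erase a).erase b,
            Sdg (ccc a b) k e PE f J0 v (φe v) (xvab a b 0 0 v)) := by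
    intro α β
    rw [key (xvab a b α β)]
    rw [← Finset.mul_prod_erase Finset.univ _ (Finset.mem_univ a)]
    rw [← Finset.mul_prod_erase (Finset.univ.erase a) _
      (Finset.mem_erase.2 ⟨Ne.symm hab, Finset.mem_univ b⟩)]
    congr 2
    apply Finset.prod_congr rfl
    intro v hv
    rw [Finset.mem_erase, Finset.mem_erase] at hv
    congr 1
    apply Fin.ext
    simp [xvab, hv.1, hv.2.1]
  have hxa : ∀ α β β' : Fin 2, xvab a b α β a = xvab a b α β' a :=
    fun α β β' => Fin.ext (by simp [xvab])
  have hxb : ∀ α α' β : Fin 2, xvab a b α β b = xvab a b α' β b :=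
    fun α α' β => Fin.ext (by simp [xvab, Ne.symm hab])
  set A0 := Sdg (ccc a b) k e PE f J0 a (φe a) (xvab a b 0 0 a) with hA0d
  set A1 := Sdg (ccc a b) k e PE f J0 a (φe a) (xvab a b 1 0 a) with hA1d
  set B0 := Sdg (ccc a b) k e PE f J0 b (φe b) (xvab a b 0 0 b) with hB0d
  set B1 := Sdg (ccc a b) k e PE f J0 b (φe b) (xvab a b 0 1 b) with hB1d
  set R := ∏ v ∈ (Finset.univ.erase a).erase b,
      Sdg (ccc a b) k e PE f J0 v (φe v) (xvab a b 0 0 v) with hRd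
  have e00 : A0 * (B0 * R) = 2⁻¹ := by
    rw [← hprod 0 0, PPc_xvab hab]; norm_num
  have e11 : A1 * (B1 * R) = 2⁻¹ := by
    have h := hprod 1 1
    rw [hxa 1 1 0, hxb 1 0 1, PPc_xvab hab] at h
    rw [← h]; norm_num
  have e01 : A0 * (B1 * R) = 0 := by
    have h := hprod 0 1
    rw [hxa 0 1 0, PPc_xvab hab] at h
    rw [← h]; norm_num
  have e10 : A1 * (B0 * R) = 0 := by
    have h := hprod 1 0
    rw [hxb 1 0 0, PPc_xvab hab] at h
    rw [← h]; norm_num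
  have hcontr : ((2:ℝ)⁻¹) * 2⁻¹ = 0 := by
    calc ((2:ℝ)⁻¹) * 2⁻¹ = (A0 * (B0 * R)) * (A1 * (B1 * R)) := by rw [e00, e11]
    _ = (A0 * (B1 * R)) * (A1 * (B0 * R)) := by ring
    _ = 0 := by rw [e01, e10, zero_mul]
  norm_num at hcontr

end NotRealizable
/-- For two confounder-free mDAGs on the same node set, both consistent
with the same fixed nodal ordering (given by the linear order on `V`), observational
dominance holds if and only if structural dominance holds. -/
theorem confounder_free_obs_dominance_iff_struct_dominance
    {V : Type} [Fintype V] [LinearOrder V]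
    (G G' : mDAG V) (hG : G.ConfounderFree) (hG' : G'.ConfounderFree)
    (hOG : G.OrderConsistent) (hOG' : G'.OrderConsistent) :
    G.ObsDominates G' ↔ G.StructDominates G' := by
  classical
  constructor
  · intro hObs
    constructor
    · intro x y hxy
      by_contra hn
      have hne : x ≠ y := by
        rintro rfl
        exact G'.no_self_edge x hxy
      have hxy2 : x < y := by
        rcases lt_or_gt_of_ne hne with h | h
        · exact h
        · exact absurd (Relation.TransGen.single hxy) (hOG' y x h)
      have hnyx : ¬ G.edge y x := fun h => hOG x y hxy2 (Relation.TransGen.single h)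
      have hreal := PPc_realizable G' hne hxy
      have hreal2 := hObs (ccc x y) (PPc x y) hreal
      exact PPc_not_realizable G hG hne hn hnyx hreal2
    · rw [mDAG.faces_eq_of_confounderFree hG' hG]
  · intro hs c P hP
    exact realizable_mono G G' (mDAG.faces_eq_of_confounderFree hG' hG) hs.1 c P hP
end

section
/- (HLP edge-adding rule) Let 𝔊 = (D,B) be an mDAG and let x, y be two of its nodes such that adding the directed edge x→y to D keeps it acyclic. Suppose that (1) every parent of x in D is a parent of y in D, and (2) every facet of B that contains x also contains y. Let 𝔊' be the mDAG obtained from 𝔊 by adding the directed edge x→y. Then 𝔊 observationally dominates 𝔊'; consequently (since 𝔊' structurally dominates 𝔊) the two mDAGs are observationally equivalent. -/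
open scoped Classical

/-! ## Auxiliary machinery for the HLP edge-adding rule -/

namespace HLPaux

open Finset

variable {V : Type}

/-- Transport a facet of `G` to a facet of `G'` when the two face complexes agree. -/
def toF' (G G' : mDAG V) (h : G'.faces = G.faces) (A : G.Facets) : G'.Facets :=
  ⟨A.1, by
    obtain ⟨h1, h2⟩ := A.2
    exact ⟨by rw [h]; exact h1, fun B hB hsub => h2 B (by rw [← h]; exact hB) hsub⟩⟩

/-- Transport a facet of `G'` to a facet of `G` when the two face complexes agree. -/
def toF (G G' : mDAG V) (h : G'.faces = G.faces) (B : G'.Facets) : G.Facets :=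
  ⟨B.1, by
    obtain ⟨h1, h2⟩ := B.2
    exact ⟨by rw [← h]; exact h1, fun C hC hsub => h2 C (by rw [h]; exact hC) hsub⟩⟩

example (G G' : mDAG V) (h : G'.faces = G.faces) (A : G.Facets) :
    toF G G' h (toF' G G' h A) = A := rfl

example (G G' : mDAG V) (h : G'.faces = G.faces) (B : G'.Facets) :
    toF' G G' h (toF G G' h B) = B := rfl

example (G : mDAG V) (u v : V) : G.canon.edge (Sum.inl u) (Sum.inl v) ↔ G.edge u v :=
  Iff.rfl

example (G : mDAG V) (A : G.Facets) (v : V) :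
    G.canon.edge (Sum.inr A) (Sum.inl v) ↔ v ∈ A.1 := Iff.rfl

/-- Every node is contained in some facet. -/
lemma exists_facet_mem [Fintype V] [DecidableEq V] (G : mDAG V) (x : V) :
    ∃ A : G.Facets, x ∈ A.1 := by
  classical
  have hxs : ({x} : Finset V) ∈ G.faces.filter (fun B => x ∈ B) :=
    Finset.mem_filter.2 ⟨G.singleton_mem x, Finset.mem_singleton_self x⟩
  obtain ⟨B, hBs, hBmax⟩ :=
    Finset.exists_max_image (G.faces.filter (fun B => x ∈ B)) Finset.card ⟨_, hxs⟩
  obtain ⟨hBf, hxB⟩ := Finset.mem_filter.1 hBs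
  refine ⟨⟨B, hBf, fun C hC hsub => ?_⟩, hxB⟩
  exact Finset.eq_of_subset_of_card_le hsub
    (hBmax C (Finset.mem_filter.2 ⟨hC, hsub hxB⟩))


/-- Translation of joint assignments from the `G'`-indexed latent variables to the
`G`-indexed latent variables (used for structural dominance with equal faces). -/
def trg (G G' : mDAG V) (h : G'.faces = G.faces) (c : V → ℕ) (k : G.Facets → ℕ)
    (g' : (b : V ⊕ G'.Facets) → Fin (Sum.elim c (fun B => k (toF G G' h B)) b)) :
    (b : V ⊕ G.Facets) → Fin (Sum.elim c k b)
  | Sum.inl v => g' (Sum.inl v)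
  | Sum.inr A => g' (Sum.inr (toF' G G' h A))

lemma trg_joint (G G' : mDAG V) (h : G'.faces = G.faces) (c : V → ℕ) (k : G.Facets → ℕ)
    (xv : (v : V) → Fin (c v)) (xl : (A : G.Facets) → Fin (k A)) :
    trg G G' h c k
      (jointVal c (fun B => k (toF G G' h B)) xv (fun B => xl (toF G G' h B)))
      = jointVal c k xv xl := by
  funext b; cases b <;> rfl

/-- If `G'` has all edges of `G` and the same faces, then `G'` observationally
dominates `G`. -/
lemma obsDominates_of_superset [Fintype V] [DecidableEq V] (G G' : mDAG V)
    (hedge : ∀ a b : V, G.edge a b → G'.edge a b) (hfaces : G'.faces = G.faces) :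
    G'.ObsDominates G := by
  classical
  rintro c P ⟨hPd, k, e, PE, f, hPE, hdep, hsum⟩
  refine ⟨hPd, fun B => k (toF G G' hfaces B),
    fun a' => e (Sum.map id (toF G G' hfaces) a'),
    fun a' => PE (Sum.map id (toF G G' hfaces) a'),
    fun a' => match a' with
      | Sum.inl v => fun g' ε => f (Sum.inl v) (trg G G' hfaces c k g') ε
      | Sum.inr B => fun g' ε => f (Sum.inr (toF G G' hfaces B)) (trg G G' hfaces c k g') ε,
    fun a' => hPE _, ?_, ?_⟩
  · -- dependency on parents only
    rintro (v | B) g' g₁' ε hg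
    · refine hdep (Sum.inl v) _ _ ε ?_
      rintro (u | A) hb
      · exact hg (Sum.inl u) ((hedge u v) hb)
      · exact hg (Sum.inr (toF' G G' hfaces A)) hb
    · refine hdep (Sum.inr (toF G G' hfaces B)) _ _ ε ?_
      rintro (u | A) hb
      · exact absurd hb (fun h => h)
      · exact absurd hb (fun h => h)
  · -- the sum identity
    intro xv
    rw [hsum xv]
    refine Fintype.sum_equiv
      ((⟨fun xl => fun B => xl (toF G G' hfaces B),
        fun xl' => fun A => xl' (toF' G G' hfaces A),
        fun xl => rfl, fun xl' => rfl⟩ :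
        ((A : G.Facets) → Fin (k A)) ≃
          ((B : G'.Facets) → Fin (k (toF G G' hfaces B)))))
      _ _ (fun xl => ?_)
    refine Fintype.sum_equiv
      ((⟨fun ε => fun a' => ε (Sum.map id (toF G G' hfaces) a'),
        fun ε' => fun a => match a with
          | Sum.inl v => ε' (Sum.inl v)
          | Sum.inr A => ε' (Sum.inr (toF' G G' hfaces A)),
        fun ε => funext fun a => by cases a <;> rfl,
        fun ε' => funext fun a' => by cases a' <;> rfl⟩ :
        ((a : V ⊕ G.Facets) → Fin (e a)) ≃
          ((a' : V ⊕ G'.Facets) → Fin (e (Sum.map id (toF G G' hfaces) a')))))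
      _ _ (fun ε => ?_)
    refine Fintype.prod_equiv
      ((⟨fun a => Sum.map id (toF' G G' hfaces) a, fun a' => Sum.map id (toF G G' hfaces) a',
        fun a => by cases a <;> rfl, fun a' => by cases a' <;> rfl⟩ :
        (V ⊕ G.Facets) ≃ (V ⊕ G'.Facets))) _ _ (fun a => ?_)
    cases a with
    | inl v =>
        show (if jointVal c k xv xl (Sum.inl v)
                = f (Sum.inl v) (jointVal c k xv xl) (ε (Sum.inl v)) then (1:ℝ) else 0)
              * PE (Sum.inl v) (ε (Sum.inl v))
          = (if jointVal c k xv xl (Sum.inl v)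
                = f (Sum.inl v) (trg G G' hfaces c k
                    (jointVal c (fun B => k (toF G G' hfaces B)) xv
                      (fun B => xl (toF G G' hfaces B)))) (ε (Sum.inl v)) then (1:ℝ) else 0)
              * PE (Sum.inl v) (ε (Sum.inl v))
        rw [trg_joint]
    | inr A =>
        show (if jointVal c k xv xl (Sum.inr A)
                = f (Sum.inr A) (jointVal c k xv xl) (ε (Sum.inr A)) then (1:ℝ) else 0)
              * PE (Sum.inr A) (ε (Sum.inr A))
          = (if jointVal c k xv xl (Sum.inr A)
                = f (Sum.inr A) (trg G G' hfaces c k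
                    (jointVal c (fun B => k (toF G G' hfaces B)) xv
                      (fun B => xl (toF G G' hfaces B)))) (ε (Sum.inr A)) then (1:ℝ) else 0)
              * PE (Sum.inr A) (ε (Sum.inr A))
        rw [trg_joint]

/-! ### The hard direction of the HLP rule -/

/-- A Kronecker delta times lemma. -/
lemma delta_and (P Q : Prop) [Decidable P] [Decidable Q] :
    (if P ∧ Q then (1:ℝ) else 0) = (if P then (1:ℝ) else 0) * (if Q then (1:ℝ) else 0) := by
  by_cases hP : P <;> by_cases hQ : Q <;> simp [hP, hQ]

lemma delta_pair {m n : ℕ} (a c : Fin m) (b d : Fin n) :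
    (if (finProdFinEquiv (a, b) : Fin (m * n)) = finProdFinEquiv (c, d) then (1:ℝ) else 0)
      = (if a = c then (1:ℝ) else 0) * (if b = d then (1:ℝ) else 0) := by
  by_cases h1 : a = c <;> by_cases h2 : b = d <;>
    simp [h1, h2, Equiv.apply_eq_iff_eq, Prod.ext_iff]

lemma delta_sum {n : ℕ} (t : Fin n) (q : Fin n → ℝ) :
    ∑ s : Fin n, (if t = s then (1:ℝ) else 0) * q s = q t := by
  rw [Finset.sum_eq_single t]
  · simp
  · intro b _ hb
    rw [if_neg (fun h => hb h.symm), zero_mul]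
  · intro h; exact absurd (Finset.mem_univ t) h

/-- Exchange of a sum over a function space with a product. -/
lemma sum_prod_pi {ι : Type} [Fintype ι] [DecidableEq ι] {β : ι → Type} [∀ i, Fintype (β i)]
    (t : (i : ι) → β i → ℝ) :
    (∑ g : (i : ι) → β i, ∏ i, t i (g i)) = ∏ i, ∑ b, t i b :=
  (Fintype.prod_sum t).symm

/-- Summing a function of `w i0` against a product of distributions collapses. -/
lemma sum_pi_point {ι : Type} [Fintype ι] [DecidableEq ι] {n : ℕ} (i0 : ι)
    (H Q : Fin n → ℝ) (hQ : ∑ t, Q t = 1) :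
    (∑ w : ι → Fin n, H (w i0) * ∏ i, Q (w i)) = ∑ t, H t * Q t := by
  have h1 : ∀ w : ι → Fin n, H (w i0) * ∏ i, Q (w i)
      = ∏ i, (if i = i0 then H (w i) else 1) * Q (w i) := by
    intro w
    rw [Finset.prod_mul_distrib, Finset.prod_ite_eq' Finset.univ i0 (fun i => H (w i))]
    simp
  simp_rw [h1]
  rw [sum_prod_pi (fun i s => (if i = i0 then H s else 1) * Q s)]
  have h2 : ∀ i : ι, (∑ t, (if i = i0 then H t else 1) * Q t)
      = if i = i0 then ∑ t, H t * Q t else 1 := by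
    intro i
    by_cases h : i = i0 <;> simp [h, hQ]
  simp_rw [h2]
  rw [Finset.prod_ite_eq' Finset.univ i0 (fun _ => ∑ t, H t * Q t)]
  simp

section Hard

variable {V : Type} [Fintype V] [DecidableEq V]

/-- New latent cardinalities: each latent variable additionally carries a copy of the
error variable of `x`. -/
def kN (G G' : mDAG V) (hf : G'.faces = G.faces) (k' : G'.Facets → ℕ) (ex : ℕ) :
    G.Facets → ℕ := fun A => k' (toF' G G' hf A) * ex

/-- New error cardinalities. -/
def eN (G G' : mDAG V) (hf : G'.faces = G.faces) (e' : V ⊕ G'.Facets → ℕ) (x : V) :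
    V ⊕ G.Facets → ℕ
  | Sum.inl v => e' (Sum.inl v)
  | Sum.inr A => e' (Sum.inr (toF' G G' hf A)) * e' (Sum.inl x)

attribute [reducible] kN eN

/-- New error distributions. -/
def PEN (G G' : mDAG V) (hf : G'.faces = G.faces) (e' : V ⊕ G'.Facets → ℕ) (x : V)
    (PE' : (a : V ⊕ G'.Facets) → Fin (e' a) → ℝ) :
    (a : V ⊕ G.Facets) → Fin (eN G G' hf e' x a) → ℝ
  | Sum.inl v => fun s => PE' (Sum.inl v) s
  | Sum.inr A => fun s =>
      PE' (Sum.inr (toF' G G' hf A)) ((finProdFinEquiv.symm s).1)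
        * PE' (Sum.inl x) ((finProdFinEquiv.symm s).2)

/-- Translation of a joint assignment for the new model into one for the old model. -/
def trh (G G' : mDAG V) (hf : G'.faces = G.faces) (c : V → ℕ) (k' : G'.Facets → ℕ)
    (ex : ℕ)
    (g : (b : V ⊕ G.Facets) → Fin (Sum.elim c (kN G G' hf k' ex) b)) :
    (b' : V ⊕ G'.Facets) → Fin (Sum.elim c k' b')
  | Sum.inl v => g (Sum.inl v)
  | Sum.inr B => (finProdFinEquiv.symm (g (Sum.inr (toF G G' hf B)))).1

/-- The simulated value of `x`, computed from the translated joint assignment together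
with the copy of `x`'s error variable carried by the latent variable `A0`. -/
def xvalN (G G' : mDAG V) (hf : G'.faces = G.faces) (c : V → ℕ) (k' : G'.Facets → ℕ)
    (e' : V ⊕ G'.Facets → ℕ) (x : V) (A0 : G.Facets)
    (f' : (a : V ⊕ G'.Facets) → ((b : V ⊕ G'.Facets) → Fin (Sum.elim c k' b)) →
      Fin (e' a) → Fin (Sum.elim c k' a))
    (g : (b : V ⊕ G.Facets) → Fin (Sum.elim c (kN G G' hf k' (e' (Sum.inl x))) b)) :
    Fin (c x) :=
  f' (Sum.inl x) (trh G G' hf c k' (e' (Sum.inl x)) g)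
    ((finProdFinEquiv.symm (g (Sum.inr A0))).2)

/-- The new structural functions. -/
noncomputable def fN (G G' : mDAG V) (hf : G'.faces = G.faces) (c : V → ℕ) (k' : G'.Facets → ℕ)
    (e' : V ⊕ G'.Facets → ℕ) (x y : V) (A0 : G.Facets)
    (f' : (a : V ⊕ G'.Facets) → ((b : V ⊕ G'.Facets) → Fin (Sum.elim c k' b)) →
      Fin (e' a) → Fin (Sum.elim c k' a)) :
    (a : V ⊕ G.Facets) →
      ((b : V ⊕ G.Facets) → Fin (Sum.elim c (kN G G' hf k' (e' (Sum.inl x))) b)) →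
      Fin (eN G G' hf e' x a) → Fin (Sum.elim c (kN G G' hf k' (e' (Sum.inl x))) a)
  | Sum.inl v => fun g ε =>
      if hx : v = x then
        Fin.cast (show c x = Sum.elim c (kN G G' hf k' (e' (Sum.inl x))) (Sum.inl v) by
          subst hx; rfl)
          (xvalN G G' hf c k' e' x A0 f' g)
      else if hy : v = y then
        Fin.cast (show c y = Sum.elim c (kN G G' hf k' (e' (Sum.inl x))) (Sum.inl v) by
          subst hy; rfl)
          (f' (Sum.inl y)
            (Function.update (trh G G' hf c k' (e' (Sum.inl x)) g) (Sum.inl x)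
              (xvalN G G' hf c k' e' x A0 f' g))
            (Fin.cast (show eN G G' hf e' x (Sum.inl v) = e' (Sum.inl y) by subst hy; rfl) ε))
      else f' (Sum.inl v) (trh G G' hf c k' (e' (Sum.inl x)) g) ε
  | Sum.inr A => fun g ε =>
      finProdFinEquiv
        (f' (Sum.inr (toF' G G' hf A)) (trh G G' hf c k' (e' (Sum.inl x)) g)
          ((finProdFinEquiv.symm ε).1),
        (finProdFinEquiv.symm ε).2)


variable (G G' : mDAG V) (hf : G'.faces = G.faces) (c : V → ℕ) (k' : G'.Facets → ℕ)
  (e' : V ⊕ G'.Facets → ℕ) (x y : V) (A0 : G.Facets)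
  (f' : (a : V ⊕ G'.Facets) → ((b : V ⊕ G'.Facets) → Fin (Sum.elim c k' b)) →
    Fin (e' a) → Fin (Sum.elim c k' a))
  (PE' : (a : V ⊕ G'.Facets) → Fin (e' a) → ℝ)

lemma fN_inl_x (g : (b : V ⊕ G.Facets) → Fin (Sum.elim c (kN G G' hf k' (e' (Sum.inl x))) b))
    (ε : Fin (eN G G' hf e' x (Sum.inl x))) :
    fN G G' hf c k' e' x y A0 f' (Sum.inl x) g ε = xvalN G G' hf c k' e' x A0 f' g := by
  show (if hx : x = x then _ else _) = _
  rw [dif_pos rfl]; rfl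

lemma fN_inl_y (hyx : y ≠ x)
    (g : (b : V ⊕ G.Facets) → Fin (Sum.elim c (kN G G' hf k' (e' (Sum.inl x))) b))
    (ε : Fin (eN G G' hf e' x (Sum.inl y))) :
    fN G G' hf c k' e' x y A0 f' (Sum.inl y) g ε
      = f' (Sum.inl y)
          (Function.update (trh G G' hf c k' (e' (Sum.inl x)) g) (Sum.inl x)
            (xvalN G G' hf c k' e' x A0 f' g)) ε := by
  show (if hx : y = x then _ else _) = _
  rw [dif_neg hyx]; exact dif_pos rfl

lemma fN_inl_other (v : V) (hvx : v ≠ x) (hvy : v ≠ y)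
    (g : (b : V ⊕ G.Facets) → Fin (Sum.elim c (kN G G' hf k' (e' (Sum.inl x))) b))
    (ε : Fin (eN G G' hf e' x (Sum.inl v))) :
    fN G G' hf c k' e' x y A0 f' (Sum.inl v) g ε
      = f' (Sum.inl v) (trh G G' hf c k' (e' (Sum.inl x)) g) ε := by
  show (if hx : v = x then _ else _) = _
  rw [dif_neg hvx]; exact dif_neg hvy

lemma fN_inr (A : G.Facets)
    (g : (b : V ⊕ G.Facets) → Fin (Sum.elim c (kN G G' hf k' (e' (Sum.inl x))) b))
    (ε : Fin (eN G G' hf e' x (Sum.inr A))) :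
    fN G G' hf c k' e' x y A0 f' (Sum.inr A) g ε
      = finProdFinEquiv
          (f' (Sum.inr (toF' G G' hf A)) (trh G G' hf c k' (e' (Sum.inl x)) g)
            ((finProdFinEquiv.symm ε).1),
          (finProdFinEquiv.symm ε).2) := rfl

lemma PEN_inl (v : V) (s : Fin (eN G G' hf e' x (Sum.inl v))) :
    PEN G G' hf e' x PE' (Sum.inl v) s = PE' (Sum.inl v) s := rfl

lemma PEN_inr (A : G.Facets) (s : Fin (eN G G' hf e' x (Sum.inr A))) :
    PEN G G' hf e' x PE' (Sum.inr A) s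
      = PE' (Sum.inr (toF' G G' hf A)) ((finProdFinEquiv.symm s).1)
          * PE' (Sum.inl x) ((finProdFinEquiv.symm s).2) := rfl

lemma trh_joint (xv : (v : V) → Fin (c v)) (xl' : (B : G'.Facets) → Fin (k' B))
    (w : (A : G.Facets) → Fin (e' (Sum.inl x))) :
    trh G G' hf c k' (e' (Sum.inl x))
      (jointVal c (kN G G' hf k' (e' (Sum.inl x))) xv
        (fun A => finProdFinEquiv (xl' (toF' G G' hf A), w A)))
      = jointVal c k' xv xl' := by
  funext b
  cases b with
  | inl v => rfl
  | inr B =>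
      show (finProdFinEquiv.symm
        (finProdFinEquiv (xl' (toF' G G' hf (toF G G' hf B)), w (toF G G' hf B)))).1 = xl' B
      rw [Equiv.symm_apply_apply]
      rfl

lemma snd_joint (xv : (v : V) → Fin (c v)) (xl' : (B : G'.Facets) → Fin (k' B))
    (w : (A : G.Facets) → Fin (e' (Sum.inl x))) :
    (finProdFinEquiv.symm
      ((jointVal c (kN G G' hf k' (e' (Sum.inl x))) xv
        (fun A => finProdFinEquiv (xl' (toF' G G' hf A), w A))) (Sum.inr A0))).2 = w A0 := by
  show (finProdFinEquiv.symm (finProdFinEquiv (xl' (toF' G G' hf A0), w A0))).2 = w A0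
  rw [Equiv.symm_apply_apply]

lemma xvalN_joint (xv : (v : V) → Fin (c v)) (xl' : (B : G'.Facets) → Fin (k' B))
    (w : (A : G.Facets) → Fin (e' (Sum.inl x))) :
    xvalN G G' hf c k' e' x A0 f'
      (jointVal c (kN G G' hf k' (e' (Sum.inl x))) xv
        (fun A => finProdFinEquiv (xl' (toF' G G' hf A), w A)))
      = f' (Sum.inl x) (jointVal c k' xv xl') (w A0) := by
  show f' (Sum.inl x)
      (trh G G' hf c k' (e' (Sum.inl x))
        (jointVal c (kN G G' hf k' (e' (Sum.inl x))) xv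
          (fun A => finProdFinEquiv (xl' (toF' G G' hf A), w A))))
      ((finProdFinEquiv.symm
        ((jointVal c (kN G G' hf k' (e' (Sum.inl x))) xv
          (fun A => finProdFinEquiv (xl' (toF' G G' hf A), w A))) (Sum.inr A0))).2)
    = f' (Sum.inl x) (jointVal c k' xv xl') (w A0)
  rw [trh_joint, snd_joint]

end Hard

lemma obsDominates_hard [Fintype V] [DecidableEq V] (G G' : mDAG V) (x y : V)
    (hxy : x ≠ y)
    (hpa : ∀ a : V, G.edge a x → G.edge a y)
    (hfacet : ∀ A : Finset V, G.IsFacet A → x ∈ A → y ∈ A)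
    (hedge : ∀ a b : V, G'.edge a b ↔ (G.edge a b ∨ (a = x ∧ b = y)))
    (hf : G'.faces = G.faces) :
    G.ObsDominates G' := by
  classical
  rintro c P ⟨hPd, k', e', PE', f', hPE', hdep', hsum'⟩
  obtain ⟨A0, hxA0⟩ := exists_facet_mem G x
  have hyA0 : y ∈ A0.1 := hfacet A0.1 A0.2 hxA0
  have hGEx : ∀ a : V, G'.edge a x → G.edge a x := fun a h =>
    ((hedge a x).1 h).resolve_right (fun hc => hxy hc.2)
  -- congruence for the simulated value of x
  have hxval : ∀ (g g₁ : (b : V ⊕ G.Facets) →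
        Fin (Sum.elim c (kN G G' hf k' (e' (Sum.inl x))) b)),
      (∀ u : V, G.edge u x → g (Sum.inl u) = g₁ (Sum.inl u)) →
      (∀ B : G'.Facets, x ∈ B.1 →
        g (Sum.inr (toF G G' hf B)) = g₁ (Sum.inr (toF G G' hf B))) →
      g (Sum.inr A0) = g₁ (Sum.inr A0) →
      xvalN G G' hf c k' e' x A0 f' g = xvalN G G' hf c k' e' x A0 f' g₁ := by
    intro g g₁ h1 h2 h3
    show f' (Sum.inl x) (trh G G' hf c k' (e' (Sum.inl x)) g)
        ((finProdFinEquiv.symm (g (Sum.inr A0))).2)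
      = f' (Sum.inl x) (trh G G' hf c k' (e' (Sum.inl x)) g₁)
        ((finProdFinEquiv.symm (g₁ (Sum.inr A0))).2)
    rw [show (finProdFinEquiv.symm (g (Sum.inr A0))).2
        = (finProdFinEquiv.symm (g₁ (Sum.inr A0))).2 by rw [h3]]
    refine hdep' (Sum.inl x) _ _ _ ?_
    rintro (u | B) hb
    · exact h1 u (hGEx u hb)
    · show (finProdFinEquiv.symm (g (Sum.inr (toF G G' hf B)))).1
        = (finProdFinEquiv.symm (g₁ (Sum.inr (toF G G' hf B)))).1
      rw [h2 B hb]
  refine ⟨hPd, kN G G' hf k' (e' (Sum.inl x)), eN G G' hf e' x, PEN G G' hf e' x PE',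
    fN G G' hf c k' e' x y A0 f', ?_, ?_, ?_⟩
  · -- the error distributions are distributions
    rintro (v | A)
    · exact hPE' (Sum.inl v)
    · constructor
      · intro s
        exact mul_nonneg ((hPE' _).1 _) ((hPE' _).1 _)
      · have hre := Fintype.sum_equiv
          (finProdFinEquiv :
            Fin (e' (Sum.inr (toF' G G' hf A))) × Fin (e' (Sum.inl x))
              ≃ Fin (e' (Sum.inr (toF' G G' hf A)) * e' (Sum.inl x)))
          (fun p => PE' (Sum.inr (toF' G G' hf A)) p.1 * PE' (Sum.inl x) p.2)
          (fun s => PEN G G' hf e' x PE' (Sum.inr A) s)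
          (fun p => by
            show PE' (Sum.inr (toF' G G' hf A)) p.1 * PE' (Sum.inl x) p.2
              = PEN G G' hf e' x PE' (Sum.inr A) (finProdFinEquiv p)
            exact (PEN_inr G G' hf e' x PE' A (finProdFinEquiv p)).trans (by rw [Equiv.symm_apply_apply]) |>.symm)
        rw [show (∑ s : Fin (eN G G' hf e' x (Sum.inr A)), PEN G G' hf e' x PE' (Sum.inr A) s)
            = ∑ p : Fin (e' (Sum.inr (toF' G G' hf A))) × Fin (e' (Sum.inl x)),
                PE' (Sum.inr (toF' G G' hf A)) p.1 * PE' (Sum.inl x) p.2 from hre.symm,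
          Fintype.sum_prod_type]
        rw [show (∑ s1 : Fin (e' (Sum.inr (toF' G G' hf A))),
            ∑ s2 : Fin (e' (Sum.inl x)),
              PE' (Sum.inr (toF' G G' hf A)) s1 * PE' (Sum.inl x) s2)
          = (∑ s1 : Fin (e' (Sum.inr (toF' G G' hf A))), PE' (Sum.inr (toF' G G' hf A)) s1)
              * ∑ s2 : Fin (e' (Sum.inl x)), PE' (Sum.inl x) s2 from
          (Finset.sum_mul_sum _ _ _ _).symm]
        rw [(hPE' _).2, (hPE' _).2, mul_one]
  · -- the functions depend only on parents
    rintro (v | A) g g₁ ε hg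
    · by_cases hvx : v = x
      · subst hvx
        rw [fN_inl_x, fN_inl_x]
        exact hxval g g₁ (fun u hu => hg (Sum.inl u) hu)
          (fun B hB => hg (Sum.inr (toF G G' hf B)) hB) (hg (Sum.inr A0) hxA0)
      · by_cases hvy : v = y
        · subst hvy
          rw [fN_inl_y G G' hf c k' e' x v A0 f' hvx, fN_inl_y G G' hf c k' e' x v A0 f' hvx]
          have hxv := hxval g g₁ (fun u hu => hg (Sum.inl u) (hpa u hu))
            (fun B hB => hg (Sum.inr (toF G G' hf B))
              (hfacet (toF G G' hf B).1 (toF G G' hf B).2 hB))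
            (hg (Sum.inr A0) hyA0)
          refine hdep' (Sum.inl v) _ _ _ ?_
          rintro (u | B) hb
          · by_cases hux : u = x
            · subst hux
              exact (Function.update_self (β := fun b => Fin (Sum.elim c k' b)) _ _ _).trans
                (hxv.trans (Function.update_self (β := fun b => Fin (Sum.elim c k' b)) _ _ _).symm)
            · refine (Function.update_of_ne (β := fun b => Fin (Sum.elim c k' b)) (fun h => hux (Sum.inl.inj h)) _ _).trans (Eq.trans ?_
                (Function.update_of_ne (β := fun b => Fin (Sum.elim c k' b)) (fun h => hux (Sum.inl.inj h)) _ _).symm)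
              exact hg (Sum.inl u)
                (((hedge u v).1 hb).resolve_right (fun hc => hux hc.1))
          · refine (Function.update_of_ne (β := fun b => Fin (Sum.elim c k' b)) Sum.inr_ne_inl _ _).trans (Eq.trans ?_
              (Function.update_of_ne (β := fun b => Fin (Sum.elim c k' b)) Sum.inr_ne_inl _ _).symm)
            show (finProdFinEquiv.symm (g (Sum.inr (toF G G' hf B)))).1
              = (finProdFinEquiv.symm (g₁ (Sum.inr (toF G G' hf B)))).1
            rw [hg (Sum.inr (toF G G' hf B)) hb]
        · rw [fN_inl_other G G' hf c k' e' x y A0 f' v hvx hvy,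
            fN_inl_other G G' hf c k' e' x y A0 f' v hvx hvy]
          refine hdep' (Sum.inl v) _ _ _ ?_
          rintro (u | B) hb
          · exact hg (Sum.inl u)
              (((hedge u v).1 hb).resolve_right (fun hc => hvy hc.2))
          · show (finProdFinEquiv.symm (g (Sum.inr (toF G G' hf B)))).1
              = (finProdFinEquiv.symm (g₁ (Sum.inr (toF G G' hf B)))).1
            rw [hg (Sum.inr (toF G G' hf B)) hb]
    · rw [fN_inr, fN_inr]
      rw [hdep' (Sum.inr (toF' G G' hf A)) (trh G G' hf c k' (e' (Sum.inl x)) g)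
        (trh G G' hf c k' (e' (Sum.inl x)) g₁) ((finProdFinEquiv.symm ε).1)
        (by rintro (u | B) hb <;> exact hb.elim)]
  · -- the sum identity
    intro xv
    rw [hsum' xv]
    have hex1 : ∀ xl' : (B : G'.Facets) → Fin (k' B),
        (∑ ε' : (a' : V ⊕ G'.Facets) → Fin (e' a'), ∏ a' : V ⊕ G'.Facets,
          (if jointVal c k' xv xl' a' = f' a' (jointVal c k' xv xl') (ε' a') then (1:ℝ) else 0)
            * PE' a' (ε' a'))
        = ∏ a' : V ⊕ G'.Facets, ∑ s : Fin (e' a'),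
            (if jointVal c k' xv xl' a' = f' a' (jointVal c k' xv xl') s then (1:ℝ) else 0)
              * PE' a' s :=
      fun xl' => sum_prod_pi (fun a' s =>
        (if jointVal c k' xv xl' a' = f' a' (jointVal c k' xv xl') s then (1:ℝ) else 0)
          * PE' a' s)
    have hex2 : ∀ xl : (A : G.Facets) → Fin ((kN G G' hf k' (e' (Sum.inl x))) A),
        (∑ ε : (a : V ⊕ G.Facets) → Fin (eN G G' hf e' x a), ∏ a : V ⊕ G.Facets,
          (if jointVal c (kN G G' hf k' (e' (Sum.inl x))) xv xl a
              = (fN G G' hf c k' e' x y A0 f') a (jointVal c (kN G G' hf k' (e' (Sum.inl x))) xv xl) (ε a) then (1:ℝ) else 0)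
            * (PEN G G' hf e' x PE') a (ε a))
        = ∏ a : V ⊕ G.Facets, ∑ s : Fin (eN G G' hf e' x a),
            (if jointVal c (kN G G' hf k' (e' (Sum.inl x))) xv xl a
                = (fN G G' hf c k' e' x y A0 f') a (jointVal c (kN G G' hf k' (e' (Sum.inl x))) xv xl) s then (1:ℝ) else 0)
              * (PEN G G' hf e' x PE') a s :=
      fun xl => sum_prod_pi (fun a s =>
        (if jointVal c (kN G G' hf k' (e' (Sum.inl x))) xv xl a
            = (fN G G' hf c k' e' x y A0 f') a (jointVal c (kN G G' hf k' (e' (Sum.inl x))) xv xl) s then (1:ℝ) else 0)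
          * (PEN G G' hf e' x PE') a s)
    simp only [hex1, hex2]
    have hsplit : (∑ xl : (A : G.Facets) → Fin ((kN G G' hf k' (e' (Sum.inl x))) A),
          ∏ a : V ⊕ G.Facets, ∑ s : Fin (eN G G' hf e' x a),
            (if jointVal c (kN G G' hf k' (e' (Sum.inl x))) xv xl a
                = (fN G G' hf c k' e' x y A0 f') a (jointVal c (kN G G' hf k' (e' (Sum.inl x))) xv xl) s then (1:ℝ) else 0)
              * (PEN G G' hf e' x PE') a s)
        = ∑ xl' : (B : G'.Facets) → Fin (k' B), ∑ w : G.Facets → Fin (e' (Sum.inl x)),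
            ∏ a : V ⊕ G.Facets, ∑ s : Fin (eN G G' hf e' x a),
              (if (jointVal c (kN G G' hf k' (e' (Sum.inl x))) xv (fun A => finProdFinEquiv (xl' (toF' G G' hf A), w A))) a = (fN G G' hf c k' e' x y A0 f') a (jointVal c (kN G G' hf k' (e' (Sum.inl x))) xv (fun A => finProdFinEquiv (xl' (toF' G G' hf A), w A))) s then (1:ℝ) else 0) * (PEN G G' hf e' x PE') a s := by
      have h1 : (∑ xl : (A : G.Facets) → Fin ((kN G G' hf k' (e' (Sum.inl x))) A),
            ∏ a : V ⊕ G.Facets, ∑ s : Fin (eN G G' hf e' x a),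
              (if jointVal c (kN G G' hf k' (e' (Sum.inl x))) xv xl a
                  = (fN G G' hf c k' e' x y A0 f') a (jointVal c (kN G G' hf k' (e' (Sum.inl x))) xv xl) s then (1:ℝ) else 0)
                * (PEN G G' hf e' x PE') a s)
          = ∑ p : ((B : G'.Facets) → Fin (k' B)) × (G.Facets → Fin (e' (Sum.inl x))),
              ∏ a : V ⊕ G.Facets, ∑ s : Fin (eN G G' hf e' x a),
                (if jointVal c (kN G G' hf k' (e' (Sum.inl x))) xv
                      (fun A => finProdFinEquiv (p.1 (toF' G G' hf A), p.2 A)) a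
                    = (fN G G' hf c k' e' x y A0 f') a (jointVal c (kN G G' hf k' (e' (Sum.inl x))) xv
                        (fun A => finProdFinEquiv (p.1 (toF' G G' hf A), p.2 A))) s
                  then (1:ℝ) else 0)
                * (PEN G G' hf e' x PE') a s := by
        refine Fintype.sum_equiv
          ((⟨fun xl => (fun B => (finProdFinEquiv.symm (xl (toF G G' hf B))).1,
              fun A => (finProdFinEquiv.symm (xl A)).2),
            fun p => fun A => finProdFinEquiv (p.1 (toF' G G' hf A), p.2 A),
            fun xl => funext fun A => finProdFinEquiv.apply_symm_apply (xl A),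
            fun p => Prod.ext
              (funext fun B => by
                have : finProdFinEquiv.symm (finProdFinEquiv
                    (p.1 (toF' G G' hf (toF G G' hf B)), p.2 (toF G G' hf B)))
                    = (p.1 (toF' G G' hf (toF G G' hf B)), p.2 (toF G G' hf B)) :=
                  Equiv.symm_apply_apply _ _
                show (finProdFinEquiv.symm (finProdFinEquiv
                  (p.1 (toF' G G' hf (toF G G' hf B)), p.2 (toF G G' hf B)))).1 = p.1 B
                rw [this]; rfl)
              (funext fun A => by
                have : finProdFinEquiv.symm (finProdFinEquiv
                    (p.1 (toF' G G' hf A), p.2 A)) = (p.1 (toF' G G' hf A), p.2 A) :=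
                  Equiv.symm_apply_apply _ _
                show (finProdFinEquiv.symm (finProdFinEquiv
                  (p.1 (toF' G G' hf A), p.2 A))).2 = p.2 A
                rw [this])⟩ :
            ((A : G.Facets) → Fin ((kN G G' hf k' (e' (Sum.inl x))) A)) ≃
              (((B : G'.Facets) → Fin (k' B)) × (G.Facets → Fin (e' (Sum.inl x))))))
          _ _ (fun xl => ?_)
        show _ = ∏ a : V ⊕ G.Facets, ∑ s : Fin (eN G G' hf e' x a),
            (if jointVal c (kN G G' hf k' (e' (Sum.inl x))) xv (fun A => finProdFinEquiv (finProdFinEquiv.symm (xl A))) a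
                = (fN G G' hf c k' e' x y A0 f') a (jointVal c (kN G G' hf k' (e' (Sum.inl x))) xv
                    (fun A => finProdFinEquiv (finProdFinEquiv.symm (xl A)))) s
              then (1:ℝ) else 0)
              * (PEN G G' hf e' x PE') a s
        rw [show (fun A => finProdFinEquiv (finProdFinEquiv.symm (xl A))) = xl from
          funext fun A => finProdFinEquiv.apply_symm_apply (xl A)]
      rw [h1]
      exact Fintype.sum_prod_type _
    rw [hsplit]
    refine Finset.sum_congr rfl (fun xl' _ => ?_)
    have hw : ∀ w : G.Facets → Fin (e' (Sum.inl x)),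
        (∏ a : V ⊕ G.Facets, ∑ s : Fin (eN G G' hf e' x a),
          (if (jointVal c (kN G G' hf k' (e' (Sum.inl x))) xv (fun A => finProdFinEquiv (xl' (toF' G G' hf A), w A))) a = (fN G G' hf c k' e' x y A0 f') a (jointVal c (kN G G' hf k' (e' (Sum.inl x))) xv (fun A => finProdFinEquiv (xl' (toF' G G' hf A), w A))) s then (1:ℝ) else 0) * (PEN G G' hf e' x PE') a s)
        = ((∏ v ∈ (Finset.univ.erase x).erase y, (∑ s : Fin (e' (Sum.inl v)), (if (jointVal c k' xv xl') (Sum.inl v) = f' (Sum.inl v) (jointVal c k' xv xl') s then (1:ℝ) else 0) * PE' (Sum.inl v) s)) * (∏ A : G.Facets, (∑ s : Fin (e' (Sum.inr (toF' G G' hf A))), (if (jointVal c k' xv xl') (Sum.inr (toF' G G' hf A)) = f' (Sum.inr (toF' G G' hf A)) (jointVal c k' xv xl') s then (1:ℝ) else 0) * PE' (Sum.inr (toF' G G' hf A)) s)))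
            * (((if xv x = f' (Sum.inl x) (jointVal c k' xv xl') (w A0) then (1:ℝ) else 0) * (∑ s : Fin (e' (Sum.inl y)), (if xv y = f' (Sum.inl y) (Function.update (jointVal c k' xv xl') (Sum.inl x) (f' (Sum.inl x) (jointVal c k' xv xl') (w A0))) s then (1:ℝ) else 0) * PE' (Sum.inl y) s))
                * ∏ A : G.Facets, PE' (Sum.inl x) (w A)) := by
      intro w
      have hx1 : (∑ s : Fin (eN G G' hf e' x (Sum.inl x)), (if (jointVal c (kN G G' hf k' (e' (Sum.inl x))) xv (fun A => finProdFinEquiv (xl' (toF' G G' hf A), w A))) (Sum.inl x) = (fN G G' hf c k' e' x y A0 f') (Sum.inl x) (jointVal c (kN G G' hf k' (e' (Sum.inl x))) xv (fun A => finProdFinEquiv (xl' (toF' G G' hf A), w A))) s then (1:ℝ) else 0) * (PEN G G' hf e' x PE') (Sum.inl x) s) = (if xv x = f' (Sum.inl x) (jointVal c k' xv xl') (w A0) then (1:ℝ) else 0) := by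
        have hb : ∀ s : Fin (eN G G' hf e' x (Sum.inl x)),
            (if (jointVal c (kN G G' hf k' (e' (Sum.inl x))) xv (fun A => finProdFinEquiv (xl' (toF' G G' hf A), w A))) (Sum.inl x) = (fN G G' hf c k' e' x y A0 f') (Sum.inl x) (jointVal c (kN G G' hf k' (e' (Sum.inl x))) xv (fun A => finProdFinEquiv (xl' (toF' G G' hf A), w A))) s then (1:ℝ) else 0)
              * (PEN G G' hf e' x PE') (Sum.inl x) s
            = (if xv x = f' (Sum.inl x) (jointVal c k' xv xl') (w A0) then (1:ℝ) else 0) * PE' (Sum.inl x) s := by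
          intro s
          exact congrArg₂ (· * ·) (if_congr (Iff.of_eq (congrArg (Eq _)
            ((fN_inl_x G G' hf c k' e' x y A0 f' _ s).trans
              (xvalN_joint G G' hf c k' e' x A0 f' xv xl' w)))) rfl rfl) rfl
        rw [Finset.sum_congr rfl (fun s _ => hb s)]
        exact (Finset.mul_sum _ _ _).symm.trans
          (Eq.trans (congrArg (fun z => _ * z) (hPE' (Sum.inl x)).2) (mul_one _))
      have hy1 : (∑ s : Fin (eN G G' hf e' x (Sum.inl y)), (if (jointVal c (kN G G' hf k' (e' (Sum.inl x))) xv (fun A => finProdFinEquiv (xl' (toF' G G' hf A), w A))) (Sum.inl y) = (fN G G' hf c k' e' x y A0 f') (Sum.inl y) (jointVal c (kN G G' hf k' (e' (Sum.inl x))) xv (fun A => finProdFinEquiv (xl' (toF' G G' hf A), w A))) s then (1:ℝ) else 0) * (PEN G G' hf e' x PE') (Sum.inl y) s) = (∑ s : Fin (e' (Sum.inl y)), (if xv y = f' (Sum.inl y) (Function.update (jointVal c k' xv xl') (Sum.inl x) (f' (Sum.inl x) (jointVal c k' xv xl') (w A0))) s then (1:ℝ) else 0) * PE' (Sum.inl y)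 s) := by
        have hb : ∀ s : Fin (eN G G' hf e' x (Sum.inl y)),
            (if (jointVal c (kN G G' hf k' (e' (Sum.inl x))) xv (fun A => finProdFinEquiv (xl' (toF' G G' hf A), w A))) (Sum.inl y) = (fN G G' hf c k' e' x y A0 f') (Sum.inl y) (jointVal c (kN G G' hf k' (e' (Sum.inl x))) xv (fun A => finProdFinEquiv (xl' (toF' G G' hf A), w A))) s then (1:ℝ) else 0)
              * (PEN G G' hf e' x PE') (Sum.inl y) s
            = (if xv y = f' (Sum.inl y) (Function.update (jointVal c k' xv xl') (Sum.inl x)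
                  (f' (Sum.inl x) (jointVal c k' xv xl') (w A0))) s then (1:ℝ) else 0)
                * PE' (Sum.inl y) s := by
          intro s
          exact congrArg₂ (· * ·) (if_congr (Iff.of_eq (congrArg (Eq _)
            ((fN_inl_y G G' hf c k' e' x y A0 f' (Ne.symm hxy) _ s).trans
              (congrArg₂ (fun (g : (b : V ⊕ G'.Facets) → Fin (Sum.elim c k' b))
                  (v : Fin (Sum.elim c k' (Sum.inl x))) => f' (Sum.inl y) (Function.update g (Sum.inl x) v) s)
                (trh_joint G G' hf c k' e' x xv xl' w)
                (xvalN_joint G G' hf c k' e' x A0 f' xv xl' w))))) rfl rfl) rfl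
        exact Finset.sum_congr rfl (fun s _ => hb s)
      have hv1 : ∀ v : V, v ≠ x → v ≠ y →
          (∑ s : Fin (eN G G' hf e' x (Sum.inl v)), (if (jointVal c (kN G G' hf k' (e' (Sum.inl x))) xv (fun A => finProdFinEquiv (xl' (toF' G G' hf A), w A))) (Sum.inl v) = (fN G G' hf c k' e' x y A0 f') (Sum.inl v) (jointVal c (kN G G' hf k' (e' (Sum.inl x))) xv (fun A => finProdFinEquiv (xl' (toF' G G' hf A), w A))) s then (1:ℝ) else 0) * (PEN G G' hf e' x PE') (Sum.inl v) s) = (∑ s : Fin (e' (Sum.inl v)), (if (jointVal c k' xv xl') (Sum.inl v) = f' (Sum.inl v) (jointVal c k' xv xl') s then (1:ℝ) else 0) * PE' (Sum.inl v) s) := by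
        intro v hvx hvy
        have hb : ∀ s : Fin (eN G G' hf e' x (Sum.inl v)),
            (if (jointVal c (kN G G' hf k' (e' (Sum.inl x))) xv (fun A => finProdFinEquiv (xl' (toF' G G' hf A), w A))) (Sum.inl v) = (fN G G' hf c k' e' x y A0 f') (Sum.inl v) (jointVal c (kN G G' hf k' (e' (Sum.inl x))) xv (fun A => finProdFinEquiv (xl' (toF' G G' hf A), w A))) s then (1:ℝ) else 0)
              * (PEN G G' hf e' x PE') (Sum.inl v) s
            = (if (jointVal c k' xv xl') (Sum.inl v) = f' (Sum.inl v) (jointVal c k' xv xl') s then (1:ℝ) else 0)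
                * PE' (Sum.inl v) s := by
          intro s
          rw [fN_inl_other G G' hf c k' e' x y A0 f' v hvx hvy, trh_joint]; rfl
        exact Finset.sum_congr rfl (fun s _ => hb s)
      have hA1 : ∀ A : G.Facets,
          (∑ s : Fin (eN G G' hf e' x (Sum.inr A)), (if (jointVal c (kN G G' hf k' (e' (Sum.inl x))) xv (fun A => finProdFinEquiv (xl' (toF' G G' hf A), w A))) (Sum.inr A) = (fN G G' hf c k' e' x y A0 f') (Sum.inr A) (jointVal c (kN G G' hf k' (e' (Sum.inl x))) xv (fun A => finProdFinEquiv (xl' (toF' G G' hf A), w A))) s then (1:ℝ) else 0) * (PEN G G' hf e' x PE') (Sum.inr A) s)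
          = (∑ s : Fin (e' (Sum.inr (toF' G G' hf A))), (if (jointVal c k' xv xl') (Sum.inr (toF' G G' hf A)) = f' (Sum.inr (toF' G G' hf A)) (jointVal c k' xv xl') s then (1:ℝ) else 0) * PE' (Sum.inr (toF' G G' hf A)) s) * PE' (Sum.inl x) (w A) := by
        intro A
        have hre : (∑ s : Fin (eN G G' hf e' x (Sum.inr A)), (if (jointVal c (kN G G' hf k' (e' (Sum.inl x))) xv (fun A => finProdFinEquiv (xl' (toF' G G' hf A), w A))) (Sum.inr A) = (fN G G' hf c k' e' x y A0 f') (Sum.inr A) (jointVal c (kN G G' hf k' (e' (Sum.inl x))) xv (fun A => finProdFinEquiv (xl' (toF' G G' hf A), w A))) s then (1:ℝ) else 0) * (PEN G G' hf e' x PE') (Sum.inr A) s)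
            = ∑ p : Fin (e' (Sum.inr (toF' G G' hf A))) × Fin (e' (Sum.inl x)),
                (if (jointVal c (kN G G' hf k' (e' (Sum.inl x))) xv (fun A => finProdFinEquiv (xl' (toF' G G' hf A), w A))) (Sum.inr A) = (fN G G' hf c k' e' x y A0 f') (Sum.inr A) (jointVal c (kN G G' hf k' (e' (Sum.inl x))) xv (fun A => finProdFinEquiv (xl' (toF' G G' hf A), w A))) (finProdFinEquiv p)
                  then (1:ℝ) else 0) * (PEN G G' hf e' x PE') (Sum.inr A) (finProdFinEquiv p) :=
          (Fintype.sum_equiv finProdFinEquiv _ _ (fun p => rfl)).symm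
        rw [hre]
        have hb : ∀ p : Fin (e' (Sum.inr (toF' G G' hf A))) × Fin (e' (Sum.inl x)),
            (if (jointVal c (kN G G' hf k' (e' (Sum.inl x))) xv (fun A => finProdFinEquiv (xl' (toF' G G' hf A), w A))) (Sum.inr A) = (fN G G' hf c k' e' x y A0 f') (Sum.inr A) (jointVal c (kN G G' hf k' (e' (Sum.inl x))) xv (fun A => finProdFinEquiv (xl' (toF' G G' hf A), w A))) (finProdFinEquiv p)
              then (1:ℝ) else 0) * (PEN G G' hf e' x PE') (Sum.inr A) (finProdFinEquiv p)
            = ((if xl' (toF' G G' hf A)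
                  = f' (Sum.inr (toF' G G' hf A)) (jointVal c k' xv xl') p.1 then (1:ℝ) else 0)
                * PE' (Sum.inr (toF' G G' hf A)) p.1)
              * ((if w A = p.2 then (1:ℝ) else 0) * PE' (Sum.inl x) p.2) := by
          intro p
          rw [fN_inr, trh_joint, PEN_inr, Equiv.symm_apply_apply,
            show (jointVal c (kN G G' hf k' (e' (Sum.inl x))) xv (fun A => finProdFinEquiv (xl' (toF' G G' hf A), w A))) (Sum.inr A) = finProdFinEquiv (xl' (toF' G G' hf A), w A) from rfl]
          show (if (finProdFinEquiv (xl' (toF' G G' hf A), w A) :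
                Fin (k' (toF' G G' hf A) * e' (Sum.inl x)))
              = finProdFinEquiv
                  (@Prod.mk (Fin (k' (toF' G G' hf A))) (Fin (e' (Sum.inl x)))
                    (f' (Sum.inr (toF' G G' hf A)) (jointVal c k' xv xl') p.1) p.2)
              then (1:ℝ) else 0)
            * (PE' (Sum.inr (toF' G G' hf A)) p.1 * PE' (Sum.inl x) p.2) = _
          have hd := delta_pair (xl' (toF' G G' hf A))
            (f' (Sum.inr (toF' G G' hf A)) (jointVal c k' xv xl') p.1) (w A) p.2
          rw [hd]
          ring
        rw [Finset.sum_congr rfl (fun p _ => hb p), Fintype.sum_prod_type]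
        have hc : ∀ s1 : Fin (e' (Sum.inr (toF' G G' hf A))),
            (∑ s2 : Fin (e' (Sum.inl x)),
              ((if xl' (toF' G G' hf A)
                  = f' (Sum.inr (toF' G G' hf A)) (jointVal c k' xv xl') s1 then (1:ℝ) else 0)
                * PE' (Sum.inr (toF' G G' hf A)) s1)
              * ((if w A = s2 then (1:ℝ) else 0) * PE' (Sum.inl x) s2))
            = ((if xl' (toF' G G' hf A)
                  = f' (Sum.inr (toF' G G' hf A)) (jointVal c k' xv xl') s1 then (1:ℝ) else 0)
                * PE' (Sum.inr (toF' G G' hf A)) s1) * PE' (Sum.inl x) (w A) := by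
          intro s1
          rw [← Finset.mul_sum, delta_sum (w A) (fun s2 => PE' (Sum.inl x) s2)]
        rw [Finset.sum_congr rfl (fun s1 _ => hc s1), ← Finset.sum_mul]
        exact congrArg₂ (· * ·) (Finset.sum_congr rfl (fun s _ => congrArg₂ (· * ·) (if_congr Iff.rfl rfl rfl) rfl)) rfl
      rw [Fintype.prod_sum_type,
        ← Finset.mul_prod_erase Finset.univ _ (Finset.mem_univ x),
        ← Finset.mul_prod_erase (Finset.univ.erase x) _
          (Finset.mem_erase.2 ⟨Ne.symm hxy, Finset.mem_univ y⟩),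
        hx1, hy1,
        Finset.prod_congr rfl (fun v hv => hv1 v
          (Finset.ne_of_mem_erase (Finset.mem_of_mem_erase hv))
          (Finset.ne_of_mem_erase hv)),
        Finset.prod_congr rfl (fun A _ => hA1 A), Finset.prod_mul_distrib]
      ring
    simp only [hw]
    rw [← Finset.mul_sum,
      show (∑ w : G.Facets → Fin (e' (Sum.inl x)),
          ((if xv x = f' (Sum.inl x) (jointVal c k' xv xl') (w A0) then (1:ℝ) else 0) * (∑ s : Fin (e' (Sum.inl y)), (if xv y = f' (Sum.inl y) (Function.update (jointVal c k' xv xl') (Sum.inl x) (f' (Sum.inl x) (jointVal c k' xv xl') (w A0))) s then (1:ℝ) else 0) * PE' (Sum.inl y) s))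
            * ∏ A : G.Facets, PE' (Sum.inl x) (w A))
        = ∑ t : Fin (e' (Sum.inl x)),
            ((if xv x = f' (Sum.inl x) (jointVal c k' xv xl') t then (1:ℝ) else 0) * (∑ s : Fin (e' (Sum.inl y)), (if xv y = f' (Sum.inl y) (Function.update (jointVal c k' xv xl') (Sum.inl x) (f' (Sum.inl x) (jointVal c k' xv xl') t)) s then (1:ℝ) else 0) * PE' (Sum.inl y) s)) * PE' (Sum.inl x) t from
        sum_pi_point A0 (fun t => (if xv x = f' (Sum.inl x) (jointVal c k' xv xl') t then (1:ℝ) else 0) * (∑ s : Fin (e' (Sum.inl y)), (if xv y = f' (Sum.inl y) (Function.update (jointVal c k' xv xl') (Sum.inl x) (f' (Sum.inl x) (jointVal c k' xv xl') t)) s then (1:ℝ) else 0) * PE' (Sum.inl y) s))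
          (fun t => PE' (Sum.inl x) t) (hPE' (Sum.inl x)).2]
    have hYt : ∀ t : Fin (e' (Sum.inl x)),
        ((if xv x = f' (Sum.inl x) (jointVal c k' xv xl') t then (1:ℝ) else 0) * (∑ s : Fin (e' (Sum.inl y)), (if xv y = f' (Sum.inl y) (Function.update (jointVal c k' xv xl') (Sum.inl x) (f' (Sum.inl x) (jointVal c k' xv xl') t)) s then (1:ℝ) else 0) * PE' (Sum.inl y) s)) * PE' (Sum.inl x) t
        = ((if xv x = f' (Sum.inl x) (jointVal c k' xv xl') t then (1:ℝ) else 0) * (∑ s : Fin (e' (Sum.inl y)), (if (jointVal c k' xv xl') (Sum.inl y) = f' (Sum.inl y) (jointVal c k' xv xl') s then (1:ℝ) else 0) * PE' (Sum.inl y) s)) * PE' (Sum.inl x) t := by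
      intro t
      by_cases hc : xv x = f' (Sum.inl x) (jointVal c k' xv xl') t
      · rw [show Function.update (jointVal c k' xv xl') (Sum.inl x) (f' (Sum.inl x) (jointVal c k' xv xl') t) = (jointVal c k' xv xl') by
          rw [← hc]; exact Function.update_eq_self (Sum.inl x) (jointVal c k' xv xl')]
        exact congrArg₂ (· * ·) (congrArg₂ (· * ·) rfl
          (Finset.sum_congr rfl (fun s _ => congrArg₂ (· * ·) (if_congr Iff.rfl rfl rfl) rfl))) rfl
      · rw [if_neg hc]
        ring
    rw [Finset.sum_congr rfl (fun t _ => hYt t),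
      show (∑ t : Fin (e' (Sum.inl x)), ((if xv x = f' (Sum.inl x) (jointVal c k' xv xl') t then (1:ℝ) else 0) * (∑ s : Fin (e' (Sum.inl y)), (if (jointVal c k' xv xl') (Sum.inl y) = f' (Sum.inl y) (jointVal c k' xv xl') s then (1:ℝ) else 0) * PE' (Sum.inl y) s)) * PE' (Sum.inl x) t)
        = (∑ s : Fin (e' (Sum.inl y)), (if (jointVal c k' xv xl') (Sum.inl y) = f' (Sum.inl y) (jointVal c k' xv xl') s then (1:ℝ) else 0) * PE' (Sum.inl y) s) * ∑ t : Fin (e' (Sum.inl x)), (if xv x = f' (Sum.inl x) (jointVal c k' xv xl') t then (1:ℝ) else 0) * PE' (Sum.inl x) t from by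
        rw [Finset.mul_sum]; exact Finset.sum_congr rfl (fun t _ => by ring)]
    rw [Fintype.prod_sum_type,
      ← Finset.mul_prod_erase Finset.univ _ (Finset.mem_univ x),
      ← Finset.mul_prod_erase (Finset.univ.erase x) _
        (Finset.mem_erase.2 ⟨Ne.symm hxy, Finset.mem_univ y⟩),
      show (∏ B : G'.Facets, (∑ s : Fin (e' (Sum.inr B)), (if (jointVal c k' xv xl') (Sum.inr B) = f' (Sum.inr B) (jointVal c k' xv xl') s then (1:ℝ) else 0) * PE' (Sum.inr B) s)) = (∏ A : G.Facets, (∑ s : Fin (e' (Sum.inr (toF' G G' hf A))), (if (jointVal c k' xv xl') (Sum.inr (toF' G G' hf A)) = f' (Sum.inr (toF' G G' hf A)) (jointVal c k' xv xl') s then (1:ℝ) else 0) * PE' (Sum.inr (toF' G G' hf A)) s)) from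
        (Fintype.prod_equiv
          ((⟨toF' G G' hf, toF G G' hf, fun _ => rfl, fun _ => rfl⟩ :
            G.Facets ≃ G'.Facets)) _ _ (fun A => rfl)).symm,
      show (∑ s : Fin (e' (Sum.inl x)), (if (jointVal c k' xv xl') (Sum.inl x) = f' (Sum.inl x) (jointVal c k' xv xl') s then (1:ℝ) else 0) * PE' (Sum.inl x) s)
        = ∑ t : Fin (e' (Sum.inl x)), (if xv x = f' (Sum.inl x) (jointVal c k' xv xl') t then (1:ℝ) else 0) * PE' (Sum.inl x) t from
          Finset.sum_congr rfl (fun s _ => congrArg₂ (· * ·) (if_congr Iff.rfl rfl rfl) rfl)]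
    ring

end HLPaux

/-- (HLP edge-adding rule.)  Let `G = (D, B)` be an mDAG with nodes
`x`, `y` such that (1) every parent of `x` in `D` is a parent of `y` in `D`, and
(2) every facet of `B` containing `x` also contains `y`.  Let `G'` be the mDAG obtained
from `G` by adding the directed edge `x → y` (the acyclicity of the result is embodied
in the existence of `G'`).  Then `G` observationally dominates `G'`, and consequently
the two mDAGs are observationally equivalent. -/
theorem hlp_edge_adding_rule
    {V : Type} [Fintype V] [DecidableEq V] (G G' : mDAG V) (x y : V)
    (hpa : ∀ a : V, G.edge a x → G.edge a y)
    (hfacet : ∀ A : Finset V, G.IsFacet A → x ∈ A → y ∈ A)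
    (hedge : ∀ a b : V, G'.edge a b ↔ (G.edge a b ∨ (a = x ∧ b = y)))
    (hfaces : G'.faces = G.faces) :
    G.ObsDominates G' ∧ G.ObsEquiv G' := by
  classical
  have hxy : x ≠ y := by
    have hE : G'.edge x y := (hedge x y).2 (Or.inr ⟨rfl, rfl⟩)
    intro h
    obtain ⟨r, hr⟩ := G'.acyclic
    have hlt := hr x y hE
    rw [h] at hlt
    exact lt_irrefl _ hlt
  have hdom : G.ObsDominates G' :=
    HLPaux.obsDominates_hard G G' x y hxy hpa hfacet hedge hfaces
  have hdom' : G'.ObsDominates G :=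
    HLPaux.obsDominates_of_superset G G' (fun a b h => (hedge a b).2 (Or.inl h)) hfaces
  exact ⟨hdom, fun c P => ⟨fun h => hdom' c P h, fun h => hdom c P h⟩⟩
end

section
/- Let 𝔊 = (D,B) be an mDAG whose simplicial complex B contains two disjoint facets C and D_f satisfying: (1) for each d ∈ D_f, every element of C and every parent (in D) of an element of C is a parent of d, and (2) for every c ∈ C, C is the only facet of B containing c. Let 𝔊' be 𝔊 with the facet C ∪ D_f (and all its subsets) added to the simplicial complex, and let 𝔊'' be 𝔊' with every directed edge c→d (c ∈ C, d ∈ D_f) removed. Then 𝔊' and 𝔊'' are observationally equivalent (so that Evans' rule is subsumed by weak facet-merging followed by the HLP edge-adding rule). -/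
open scoped Classical

section Transfer

variable {V L₁ L₂ : Type}

lemma finFamCast {ι : Type} (k : ι → ℕ) (x : (i : ι) → Fin (k i)) {i j : ι} (h : i = j) :
    finCongr (congrArg k h) (x i) = x j := by subst h; rfl

lemma pi_comp_bijective {α β : Type} (n : α → ℕ) (t : β ≃ α) :
    Function.Bijective (fun (x : (a : α) → Fin (n a)) (b : β) => x (t b)) := by
  constructor
  · intro x y hxy
    funext a
    have h1 := congrFun hxy (t.symm a)
    have trick : ∀ a' (h : a' = a), x a' = y a' → x a = y a := by
      rintro a' rfl h; exact h
    exact trick _ (t.apply_symm_apply a) h1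
  · intro z
    refine ⟨fun a => finCongr (congrArg n (t.apply_symm_apply a)) (z (t.symm a)), ?_⟩
    funext b
    exact finFamCast (fun b => n (t b)) z (t.symm_apply_apply b)

/-- Pull back an assignment along a latent relabelling. -/
def tPull (σ : L₁ ≃ L₂) (c : V → ℕ) (k : L₁ → ℕ)
    (g : (b : V ⊕ L₂) → Fin (Sum.elim c (fun l₂ => k (σ.symm l₂)) b)) :
    (b : V ⊕ L₁) → Fin (Sum.elim c k b)
  | Sum.inl v => g (Sum.inl v)
  | Sum.inr l₁ => finCongr (congrArg k (σ.symm_apply_apply l₁)) (g (Sum.inr (σ l₁)))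

/-- Transport of the structural functions along a latent relabelling. -/
def tF (σ : L₁ ≃ L₂) (c : V → ℕ) (k : L₁ → ℕ) (e : V ⊕ L₁ → ℕ)
    (f : (a : V ⊕ L₁) → ((b : V ⊕ L₁) → Fin (Sum.elim c k b)) → Fin (e a) →
      Fin (Sum.elim c k a)) :
    (a₂ : V ⊕ L₂) → ((b : V ⊕ L₂) → Fin (Sum.elim c (fun l₂ => k (σ.symm l₂)) b)) →
      Fin (e (Sum.map id σ.symm a₂)) → Fin (Sum.elim c (fun l₂ => k (σ.symm l₂)) a₂)
  | Sum.inl v => fun g ε => f (Sum.inl v) (tPull σ c k g) ε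
  | Sum.inr l₂ => fun g ε => f (Sum.inr (σ.symm l₂)) (tPull σ c k g) ε

lemma pDAG.realizable_transfer [Fintype V] [Fintype L₁] [Fintype L₂]
    [DecidableEq V] [DecidableEq L₁] [DecidableEq L₂]
    (G₁ : pDAG V L₁) (G₂ : pDAG V L₂) (σ : L₁ ≃ L₂)
    (hmono : ∀ a b : V ⊕ L₁, G₁.edge a b →
      G₂.edge (Sum.map id σ a) (Sum.map id σ b))
    (c : V → ℕ) (P : ((v : V) → Fin (c v)) → ℝ)
    (h : G₁.Realizable c P) : G₂.Realizable c P := by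
  obtain ⟨hd, k, e, PE, f, hPE, hf, hsum⟩ := h
  refine ⟨hd, fun l₂ => k (σ.symm l₂), fun a₂ => e (Sum.map id σ.symm a₂),
    fun a₂ => PE (Sum.map id σ.symm a₂), tF σ c k e f,
    fun a₂ => hPE _, ?_, ?_⟩
  · -- dependence on parents only
    rintro (v | l₂) g g' ε hag
    · refine hf (Sum.inl v) _ _ ε ?_
      rintro (w | l₁) hb
      · exact hag (Sum.inl w) (hmono _ _ hb)
      · simp only [tPull]
        exact congrArg _ (hag (Sum.inr (σ l₁)) (hmono _ _ hb))
    · refine hf (Sum.inr (σ.symm l₂)) _ _ ε ?_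
      rintro (w | l₁) hb
      · refine hag (Sum.inl w) ?_
        have := hmono _ _ hb
        simpa using this
      · simp only [tPull]
        refine congrArg _ (hag (Sum.inr (σ l₁)) ?_)
        have := hmono _ _ hb
        simpa using this
  · -- sum identity
    intro xv
    rw [hsum xv]
    refine Fintype.sum_bijective _ (pi_comp_bijective k σ.symm) _ _ ?_
    intro xl₁
    refine Fintype.sum_bijective _
      (pi_comp_bijective e (Equiv.sumCongr (Equiv.refl V) σ).symm) _ _ ?_
    intro ε₁
    refine Fintype.prod_bijective _ (Equiv.sumCongr (Equiv.refl V) σ).bijective _ _ ?_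
    have hpj : tPull σ c k
        (jointVal c (fun l₂ => k (σ.symm l₂)) xv (fun l₂ => xl₁ (σ.symm l₂)))
        = jointVal c k xv xl₁ := by
      funext b
      rcases b with v | l₁
      · rfl
      · exact finFamCast k xl₁ (σ.symm_apply_apply l₁)
    rintro (v | l₁)
    · simp only [Equiv.sumCongr_apply, Sum.map_inl, Sum.map_inr, id_eq,
        Equiv.symm_apply_apply]
      simp only [tF, hpj]
      show _ = (if jointVal c k xv xl₁ (Sum.inl v) = f (Sum.inl v) (tPull σ c k
          (jointVal c (fun l₂ => k (σ.symm l₂)) xv (fun l₂ => xl₁ (σ.symm l₂))))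
          (ε₁ (Sum.inl v)) then (1:ℝ) else 0) * PE (Sum.inl v) (ε₁ (Sum.inl v))
      rw [hpj]
    · have trick : ∀ l' (hl : l' = l₁),
          (if jointVal c k xv xl₁ (Sum.inr l') =
              f (Sum.inr l') (jointVal c k xv xl₁) (ε₁ (Sum.inr l')) then (1:ℝ) else 0)
            * PE (Sum.inr l') (ε₁ (Sum.inr l'))
          = (if jointVal c k xv xl₁ (Sum.inr l₁) =
              f (Sum.inr l₁) (jointVal c k xv xl₁) (ε₁ (Sum.inr l₁)) then (1:ℝ) else 0)
            * PE (Sum.inr l₁) (ε₁ (Sum.inr l₁)) := by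
        rintro l' rfl; rfl
      have := (trick _ (σ.symm_apply_apply l₁)).symm
      simp only [Equiv.sumCongr_apply, Sum.map_inl, Sum.map_inr, id_eq,
        Equiv.symm_apply_apply]
      simp only [tF, hpj]
      refine this.trans ?_
      show _ = (if jointVal c k xv xl₁ (Sum.inr (σ.symm (σ l₁))) = f (Sum.inr (σ.symm (σ l₁)))
          (tPull σ c k (jointVal c (fun l₂ => k (σ.symm l₂)) xv (fun l₂ => xl₁ (σ.symm l₂))))
          (ε₁ (Sum.inr (σ.symm (σ l₁)))) then (1:ℝ) else 0)
          * PE (Sum.inr (σ.symm (σ l₁))) (ε₁ (Sum.inr (σ.symm (σ l₁))))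
      rw [hpj]

end Transfer
section Solve

variable {V L : Type} [Fintype V] [Fintype L] [DecidableEq V] [DecidableEq L]

lemma solve_sum (E : V ⊕ L → V ⊕ L → Prop) (hexo : ∀ b l, ¬ E b (Sum.inr l))
    (c : V → ℕ) (k : L → ℕ) (e : V ⊕ L → ℕ)
    (PE : (a : V ⊕ L) → Fin (e a) → ℝ)
    (f : (a : V ⊕ L) → ((b : V ⊕ L) → Fin (Sum.elim c k b)) → Fin (e a) →
      Fin (Sum.elim c k a))
    (hf : ∀ a g g' ε, (∀ b, E b a → g b = g' b) → f a g ε = f a g' ε)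
    (g₀ : (b : V ⊕ L) → Fin (Sum.elim c k b))
    (xv : (v : V) → Fin (c v)) :
    (∑ xl : (l : L) → Fin (k l), ∑ ε : (a : V ⊕ L) → Fin (e a),
      ∏ a : V ⊕ L,
        (if jointVal c k xv xl a = f a (jointVal c k xv xl) (ε a) then (1:ℝ) else 0)
          * PE a (ε a))
    = ∑ ε : (a : V ⊕ L) → Fin (e a),
        ∏ a : V ⊕ L,
          (if jointVal c k xv (fun l => f (Sum.inr l) g₀ (ε (Sum.inr l))) a
              = f a (jointVal c k xv (fun l => f (Sum.inr l) g₀ (ε (Sum.inr l)))) (ε a)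
            then (1:ℝ) else 0) * PE a (ε a) := by
  rw [Finset.sum_comm]
  refine Finset.sum_congr rfl fun ε _ => ?_
  refine Fintype.sum_eq_single (fun l => f (Sum.inr l) g₀ (ε (Sum.inr l))) ?_
  intro xl hxl
  have hex : ∃ l, xl l ≠ f (Sum.inr l) g₀ (ε (Sum.inr l)) := by
    by_contra hcon
    push_neg at hcon
    exact hxl (funext hcon)
  obtain ⟨l, hl⟩ := hex
  refine Finset.prod_eq_zero (Finset.mem_univ (Sum.inr l)) ?_
  have hfl : f (Sum.inr l) (jointVal c k xv xl) (ε (Sum.inr l))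
      = f (Sum.inr l) g₀ (ε (Sum.inr l)) :=
    hf _ _ _ _ (fun b hb => absurd hb (hexo b l))
  rw [hfl]
  have : jointVal c k xv xl (Sum.inr l) = xl l := rfl
  rw [this, if_neg hl, zero_mul]

end Solve
section Evans

variable {V L : Type}

/-- Predicate selecting the visible nodes in `Cs` among all nodes. -/
def cP (Cs : Finset V) : V ⊕ L → Prop := Sum.elim (· ∈ Cs) (fun _ => False)

/-- The type of error blocks for the nodes in `Cs`. -/
def cJ (Cs : Finset V) (e : V ⊕ L → ℕ) : Type :=
  (t : {a : V ⊕ L // cP Cs a}) → Fin (e t.1)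

noncomputable instance cJ.fintype [Fintype V] [Fintype L] [DecidableEq V] [DecidableEq L]
    (Cs : Finset V) (e : V ⊕ L → ℕ) : Fintype (cJ Cs e) := by
  unfold cJ; classical infer_instance

/-- The cardinality of the error block. -/
noncomputable def cW [Fintype V] [Fintype L] [DecidableEq V] [DecidableEq L]
    (Cs : Finset V) (e : V ⊕ L → ℕ) : ℕ := Fintype.card (cJ Cs e)

/-- A fixed bijection between `Fin (cW Cs e)` and the error block. -/
noncomputable def ceW [Fintype V] [Fintype L] [DecidableEq V] [DecidableEq L]
    (Cs : Finset V) (e : V ⊕ L → ℕ) : Fin (cW Cs e) ≃ cJ Cs e :=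
  (Fintype.equivFin _).symm

variable [Fintype V] [Fintype L] [DecidableEq V] [DecidableEq L]

/-- Strip the auxiliary second components from an assignment for the enlarged model. -/
def eConv (c : V → ℕ) (k : L → ℕ) (W : ℕ)
    (g : (b : V ⊕ L) → Fin (Sum.elim c (fun l => k l * W) b)) :
    (b : V ⊕ L) → Fin (Sum.elim c k b)
  | Sum.inl v => g (Sum.inl v)
  | Sum.inr l => (finProdFinEquiv.symm (g (Sum.inr l))).1

/-- Fuel-indexed reconstruction of the values of the nodes in `Cs` from the enlarged
latent value at `M` and the values of the other parents. -/
noncomputable def eRec (Cs : Finset V) (M : L) (c : V → ℕ) (k : L → ℕ) (e : V ⊕ L → ℕ)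
    (f : (a : V ⊕ L) → ((b : V ⊕ L) → Fin (Sum.elim c k b)) → Fin (e a) →
      Fin (Sum.elim c k a))
    (hcpos : ∀ v, 0 < c v) :
    ℕ → ((b : V ⊕ L) → Fin (Sum.elim c (fun l => k l * cW Cs e) b)) → (v : V) → Fin (c v)
  | 0 => fun g v => if v ∈ Cs then ⟨0, hcpos v⟩ else g (Sum.inl v)
  | n + 1 => fun g v =>
      if hv : v ∈ Cs then
        f (Sum.inl v)
          (fun b => match b with
            | Sum.inl w => eRec Cs M c k e f hcpos n g w
            | Sum.inr l => (finProdFinEquiv.symm (g (Sum.inr l))).1)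
          (ceW Cs e ((finProdFinEquiv.symm (g (Sum.inr M))).2) ⟨Sum.inl v, hv⟩)
      else g (Sum.inl v)

/-- The structural functions of the new model. -/
noncomputable def eF (Cs Ds : Finset V) (M : L) (c : V → ℕ) (k : L → ℕ) (e : V ⊕ L → ℕ)
    (f : (a : V ⊕ L) → ((b : V ⊕ L) → Fin (Sum.elim c k b)) → Fin (e a) →
      Fin (Sum.elim c k a))
    (hcpos : ∀ v, 0 < c v) (N : ℕ) :
    (a : V ⊕ L) → ((b : V ⊕ L) → Fin (Sum.elim c (fun l => k l * cW Cs e) b)) →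
      Fin (e a * cW Cs e) → Fin (Sum.elim c (fun l => k l * cW Cs e) a)
  | Sum.inl v => fun g ε =>
      if hv : v ∈ Cs then
        f (Sum.inl v) (eConv c k (cW Cs e) g)
          (ceW Cs e ((finProdFinEquiv.symm (g (Sum.inr M))).2) ⟨Sum.inl v, hv⟩)
      else if v ∈ Ds then
        f (Sum.inl v)
          (fun b => match b with
            | Sum.inl w => eRec Cs M c k e f hcpos N g w
            | Sum.inr l => (finProdFinEquiv.symm (g (Sum.inr l))).1)
          (finProdFinEquiv.symm ε).1
      else f (Sum.inl v) (eConv c k (cW Cs e) g) (finProdFinEquiv.symm ε).1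
  | Sum.inr l => fun g ε =>
      finProdFinEquiv
        (f (Sum.inr l) (eConv c k (cW Cs e) g) (finProdFinEquiv.symm ε).1,
         (finProdFinEquiv.symm ε).2)

/-- The error distributions of the new model. -/
noncomputable def ePE (Cs : Finset V) (M : L) (e : V ⊕ L → ℕ)
    (PE : (a : V ⊕ L) → Fin (e a) → ℝ) :
    (a : V ⊕ L) → Fin (e a * cW Cs e) → ℝ := fun a ε =>
  (if cP Cs a then ((e a : ℝ))⁻¹ else PE a (finProdFinEquiv.symm ε).1) *
  (if a = Sum.inr M then
      ∏ t : {b : V ⊕ L // cP Cs b}, PE t.1 (ceW Cs e (finProdFinEquiv.symm ε).2 t)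
    else ((cW Cs e : ℝ))⁻¹)

/-- Recombine an error assignment from its `Cs` block and the rest. -/
noncomputable def recombE (Cs : Finset V) (e : V ⊕ L → ℕ)
    (cr : (t : {a : V ⊕ L // ¬ cP Cs a}) → Fin (e t.1)) (m : Fin (cW Cs e)) :
    (a : V ⊕ L) → Fin (e a) := fun a =>
  if h : cP Cs a then ceW Cs e m ⟨a, h⟩ else cr ⟨a, h⟩

lemma eRec_notC (Cs : Finset V) (M : L) (c : V → ℕ) (k : L → ℕ) (e : V ⊕ L → ℕ)
    (f : (a : V ⊕ L) → ((b : V ⊕ L) → Fin (Sum.elim c k b)) → Fin (e a) →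
      Fin (Sum.elim c k a))
    (hcpos : ∀ v, 0 < c v) (n : ℕ)
    (g : (b : V ⊕ L) → Fin (Sum.elim c (fun l => k l * cW Cs e) b)) (w : V)
    (hw : w ∉ Cs) : eRec Cs M c k e f hcpos n g w = g (Sum.inl w) := by
  cases n with
  | zero => simp [eRec, hw]; rfl
  | succ n => simp [eRec, hw]; rfl

end Evans
section Evans2

variable {V L : Type} [Fintype V] [Fintype L] [DecidableEq V] [DecidableEq L]

/-- The reconstruction only depends on the value at `M` and on the non-`Cs` parents of
`Cs`-nodes. -/
lemma eRec_congr (G₁ : pDAG V L) (Cs : Finset V) (M : L) (c : V → ℕ) (k : L → ℕ)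
    (e : V ⊕ L → ℕ)
    (f : (a : V ⊕ L) → ((b : V ⊕ L) → Fin (Sum.elim c k b)) → Fin (e a) →
      Fin (Sum.elim c k a))
    (hf : ∀ a g g' ε, (∀ b, G₁.edge b a → g b = g' b) → f a g ε = f a g' ε)
    (honly : ∀ x ∈ Cs, ∀ l : L, G₁.edge (Sum.inr l) (Sum.inl x) → l = M)
    (hcpos : ∀ v, 0 < c v) (n : ℕ)
    (g g' : (b : V ⊕ L) → Fin (Sum.elim c (fun l => k l * cW Cs e) b))
    (hM : g (Sum.inr M) = g' (Sum.inr M))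
    (hout : ∀ w, w ∉ Cs → (∃ x ∈ Cs, G₁.edge (Sum.inl w) (Sum.inl x)) →
      g (Sum.inl w) = g' (Sum.inl w)) :
    ∀ v ∈ Cs, eRec Cs M c k e f hcpos n g v = eRec Cs M c k e f hcpos n g' v := by
  induction n with
  | zero => intro v hv; simp [eRec, hv]
  | succ n ih =>
    intro v hv
    show (if hv : v ∈ Cs then _ else _) = (if hv : v ∈ Cs then _ else _)
    erw [dif_pos hv, dif_pos hv]
    rw [show (finProdFinEquiv.symm (g (Sum.inr M))).2
        = (finProdFinEquiv.symm (g' (Sum.inr M))).2 by rw [hM]]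
    refine hf _ _ _ _ ?_
    rintro (w | l) hb
    · by_cases hw : w ∈ Cs
      · exact ih w hw
      · show eRec Cs M c k e f hcpos n g w = eRec Cs M c k e f hcpos n g' w
        rw [eRec_notC _ _ _ _ _ _ _ _ _ _ hw, eRec_notC _ _ _ _ _ _ _ _ _ _ hw]
        exact hout w hw ⟨v, hv, hb⟩
    · have hlM : l = M := honly v hv l hb
      subst hlM
      show (finProdFinEquiv.symm (g (Sum.inr l))).1
          = (finProdFinEquiv.symm (g' (Sum.inr l))).1
      rw [hM]

/-- Correctness of the reconstruction under consistency of the `Cs` nodes. -/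
lemma eRec_correct (G₁ : pDAG V L) (Cs : Finset V) (M : L) (c : V → ℕ) (k : L → ℕ)
    (e : V ⊕ L → ℕ)
    (f : (a : V ⊕ L) → ((b : V ⊕ L) → Fin (Sum.elim c k b)) → Fin (e a) →
      Fin (Sum.elim c k a))
    (hf : ∀ a g g' ε, (∀ b, G₁.edge b a → g b = g' b) → f a g ε = f a g' ε)
    (hcpos : ∀ v, 0 < c v)
    (rk : V → ℕ) (hrk : ∀ w v : V, G₁.edge (Sum.inl w) (Sum.inl v) → rk w < rk v)
    (xv : (v : V) → Fin (c v))
    (xl₂ : (l : L) → Fin (k l * cW Cs e))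
    (xlo : (l : L) → Fin (k l))
    (hg2 : ∀ l, (finProdFinEquiv.symm (xl₂ l)).1 = xlo l)
    (hcons : ∀ x (hx : x ∈ Cs), xv x = f (Sum.inl x) (jointVal c k xv xlo)
      (ceW Cs e (finProdFinEquiv.symm (xl₂ M)).2 ⟨Sum.inl x, hx⟩)) :
    ∀ n (v : V), rk v < n →
      eRec Cs M c k e f hcpos n (jointVal c (fun l => k l * cW Cs e) xv xl₂) v = xv v := by
  intro n
  induction n with
  | zero => intro v hv; omega
  | succ n ih =>
    intro v hv
    by_cases hvC : v ∈ Cs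
    · show (if hv : v ∈ Cs then _ else _) = _
      erw [dif_pos hvC]
      have harg : f (Sum.inl v)
          (fun b => match b with
            | Sum.inl w => eRec Cs M c k e f hcpos n
                (jointVal c (fun l => k l * cW Cs e) xv xl₂) w
            | Sum.inr l => (finProdFinEquiv.symm
                ((jointVal c (fun l => k l * cW Cs e) xv xl₂) (Sum.inr l))).1)
          (ceW Cs e ((finProdFinEquiv.symm
            ((jointVal c (fun l => k l * cW Cs e) xv xl₂) (Sum.inr M))).2) ⟨Sum.inl v, hvC⟩)
          = f (Sum.inl v) (jointVal c k xv xlo)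
            (ceW Cs e (finProdFinEquiv.symm (xl₂ M)).2 ⟨Sum.inl v, hvC⟩) := by
        refine hf _ _ _ _ ?_
        rintro (w | l) hb
        · by_cases hwC : w ∈ Cs
          · exact ih w (by have := hrk w v hb; omega)
          · show eRec Cs M c k e f hcpos n _ w = xv w
            rw [eRec_notC _ _ _ _ _ _ _ _ _ _ hwC]
            rfl
        · exact hg2 l
      rw [harg]
      exact (hcons v hvC).symm
    · show (if hv : v ∈ Cs then _ else _) = _
      erw [dif_neg hvC]
      rfl

end Evans2
section Evans2b

variable {V L : Type} [Fintype V] [Fintype L] [DecidableEq V] [DecidableEq L]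

/-- Reassemble an error vector for the enlarged model from four blocks. -/
noncomputable def bigSplit (Cs : Finset V) (e : V ⊕ L → ℕ) (M : L)
    (q : (cJ Cs e × ((t : {a : V ⊕ L // ¬ cP Cs a}) → Fin (e t.1)))
       × (Fin (cW Cs e) × ({a : V ⊕ L // ¬(a = Sum.inr M)} → Fin (cW Cs e)))) :
    (a : V ⊕ L) → Fin (e a * cW Cs e) := fun a =>
  finProdFinEquiv
    ((if h : cP Cs a then q.1.1 ⟨a, h⟩ else q.1.2 ⟨a, h⟩),
     (if h : a = Sum.inr M then q.2.1 else q.2.2 ⟨a, h⟩))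

lemma bigSplit_bijective (Cs : Finset V) (e : V ⊕ L → ℕ) (M : L) :
    Function.Bijective (bigSplit (L := L) Cs e M) := by
  rw [Function.bijective_iff_has_inverse]
  refine ⟨fun ε => ((fun t => (finProdFinEquiv.symm (ε t.1)).1,
      fun t => (finProdFinEquiv.symm (ε t.1)).1),
      ((finProdFinEquiv.symm (ε (Sum.inr M))).2,
      fun t => (finProdFinEquiv.symm (ε t.1)).2)), ?_, ?_⟩
  · rintro ⟨⟨cc, cr⟩, ⟨m, jr⟩⟩
    refine Prod.ext (Prod.ext ?_ ?_) (Prod.ext ?_ ?_)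
    · funext t
      show (finProdFinEquiv.symm (bigSplit Cs e M ((cc, cr), (m, jr)) t.1)).1 = cc t
      rw [bigSplit, Equiv.symm_apply_apply, dif_pos t.2]
    · funext t
      show (finProdFinEquiv.symm (bigSplit Cs e M ((cc, cr), (m, jr)) t.1)).1 = cr t
      rw [bigSplit, Equiv.symm_apply_apply, dif_neg t.2]
    · show (finProdFinEquiv.symm (bigSplit Cs e M ((cc, cr), (m, jr)) (Sum.inr M))).2 = m
      rw [bigSplit, Equiv.symm_apply_apply, dif_pos rfl]
    · funext t
      show (finProdFinEquiv.symm (bigSplit Cs e M ((cc, cr), (m, jr)) t.1)).2 = jr t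
      rw [bigSplit, Equiv.symm_apply_apply, dif_neg t.2]
  · intro ε
    funext a
    rw [bigSplit]
    have h1 : (if h : cP Cs a then
          (fun (t : {b : V ⊕ L // cP Cs b}) => (finProdFinEquiv.symm (ε t.1)).1) ⟨a, h⟩
        else (fun (t : {b : V ⊕ L // ¬ cP Cs b}) => (finProdFinEquiv.symm (ε t.1)).1) ⟨a, h⟩)
        = (finProdFinEquiv.symm (ε a)).1 := by
      by_cases h : cP Cs a
      · rw [dif_pos h]
      · rw [dif_neg h]
    have h2 : (if h : a = Sum.inr M then (finProdFinEquiv.symm (ε (Sum.inr M))).2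
        else (fun (t : {b : V ⊕ L // ¬(b = Sum.inr M)}) =>
          (finProdFinEquiv.symm (ε t.1)).2) ⟨a, h⟩)
        = (finProdFinEquiv.symm (ε a)).2 := by
      by_cases h : a = Sum.inr M
      · rw [dif_pos h, h]
      · rw [dif_neg h]
    rw [h1, h2]
    exact Equiv.apply_symm_apply _ _
  
lemma recombE_bijective (Cs : Finset V) (e : V ⊕ L → ℕ) :
    Function.Bijective
      (fun (q : ((t : {a : V ⊕ L // ¬ cP Cs a}) → Fin (e t.1)) × Fin (cW Cs e)) =>
        recombE Cs e q.1 q.2) := by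
  rw [Function.bijective_iff_has_inverse]
  refine ⟨fun ε => (fun t => ε t.1, (ceW Cs e).symm (fun t => ε t.1)), ?_, ?_⟩
  · rintro ⟨cr, m⟩
    refine Prod.ext ?_ ?_
    · funext t
      show recombE Cs e cr m t.1 = cr t
      rw [recombE]
      rw [dif_neg t.2]
    · show (ceW Cs e).symm (fun (t : {a : V ⊕ L // cP Cs a}) => recombE Cs e cr m t.1) = m
      have harg : (fun (t : {a : V ⊕ L // cP Cs a}) => recombE Cs e cr m t.1)
          = ceW Cs e m := by
        funext t
        show recombE Cs e cr m t.1 = ceW Cs e m t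
        rw [recombE]
        rw [dif_pos t.2]
      rw [harg, Equiv.symm_apply_apply]
  · intro ε
    funext a
    show recombE Cs e _ _ a = ε a
    rw [recombE]
    by_cases h : cP Cs a
    · rw [dif_pos h]
      have := Equiv.apply_symm_apply (ceW Cs e) (fun (t : {a : V ⊕ L // cP Cs a}) => ε t.1)
      rw [this]
    · rw [dif_neg h]

end Evans2b
section Evans3

variable {V L : Type} [Fintype V] [Fintype L] [DecidableEq V] [DecidableEq L]

lemma sum_fin_mul {m n : ℕ} (F : Fin m → ℝ) (G : Fin n → ℝ) :
    (∑ ε : Fin (m * n), F (finProdFinEquiv.symm ε).1 * G (finProdFinEquiv.symm ε).2)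
      = (∑ x, F x) * (∑ y, G y) := by
  have h1 : (∑ ε : Fin (m * n), F (finProdFinEquiv.symm ε).1 * G (finProdFinEquiv.symm ε).2)
      = ∑ p : Fin m × Fin n, F p.1 * G p.2 :=
    Fintype.sum_equiv finProdFinEquiv.symm _ _ (fun ε => rfl)
  rw [h1, Fintype.sum_prod_type, ← Finset.sum_mul_sum]

lemma sum_fin_inv {n : ℕ} (hn : 0 < n) : (∑ _x : Fin n, ((n : ℝ))⁻¹) = 1 := by
  rw [Finset.sum_const, Finset.card_univ, Fintype.card_fin, nsmul_eq_mul,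
    mul_inv_cancel₀ (Nat.cast_ne_zero.mpr hn.ne')]

lemma evans_alg (CC CJR K1 K2 X : ℝ) (h1 : CC * K1 = 1) (h2 : CJR * K2 = 1) :
    CC * (CJR * (X * (K1 * K2))) = X := by
  have h : CC * (CJR * (X * (K1 * K2))) = (CC * K1) * ((CJR * K2) * X) := by ring
  rw [h, h1, h2, one_mul, one_mul]

lemma pDAG.realizable_evans (G₁ G₂ : pDAG V L) (Cs Ds : Finset V) (M : L)
    (hexo₁ : ∀ b l, ¬ G₁.edge b (Sum.inr l))
    (hexo₂ : ∀ b l, ¬ G₂.edge b (Sum.inr l))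
    (hVV : ∀ u v : V, G₂.edge (Sum.inl u) (Sum.inl v) ↔
      (G₁.edge (Sum.inl u) (Sum.inl v) ∧ ¬(u ∈ Cs ∧ v ∈ Ds)))
    (hLV : ∀ (l : L) (v : V), G₂.edge (Sum.inr l) (Sum.inl v) ↔
      G₁.edge (Sum.inr l) (Sum.inl v))
    (hMe : ∀ v : V, v ∈ Cs ∪ Ds → G₁.edge (Sum.inr M) (Sum.inl v))
    (honly : ∀ x ∈ Cs, ∀ l : L, G₁.edge (Sum.inr l) (Sum.inl x) → l = M)
    (hdisj : ∀ x ∈ Cs, x ∉ Ds)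
    (hCD : ∀ d ∈ Ds, ∀ p : V, (∃ x ∈ Cs, G₁.edge (Sum.inl p) (Sum.inl x)) →
      G₁.edge (Sum.inl p) (Sum.inl d))
    (c : V → ℕ) (P : ((v : V) → Fin (c v)) → ℝ)
    (h : G₁.Realizable c P) : G₂.Realizable c P := by
  obtain ⟨hd, k, e, PE, f, hPE, hf, hsum⟩ := h
  have hcpos : ∀ v, 0 < c v := by
    intro v
    by_contra hneg
    have h0 : c v = 0 := by omega
    have hie : IsEmpty ((v : V) → Fin (c v)) := ⟨fun xv => (h0 ▸ xv v).elim0⟩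
    have hone := hd.2
    rw [Finset.univ_eq_empty, Finset.sum_empty] at hone
    exact one_ne_zero hone.symm
  have hkpos : ∀ l, 0 < k l := by
    intro l
    by_contra hneg
    have h0 : k l = 0 := by omega
    have hz : ∀ xv, P xv = 0 := by
      intro xv
      rw [hsum xv]
      have hie : IsEmpty ((l : L) → Fin (k l)) := ⟨fun xl => (h0 ▸ xl l).elim0⟩
      rw [Finset.univ_eq_empty, Finset.sum_empty]
    have hone := hd.2
    rw [Finset.sum_congr rfl fun x _ => hz x, Finset.sum_const, smul_zero] at hone
    exact one_ne_zero hone.symm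
  have hepos : ∀ a, 0 < e a := by
    intro a
    by_contra hneg
    have h0 : e a = 0 := by omega
    have hz : ∀ xv, P xv = 0 := by
      intro xv
      rw [hsum xv]
      have hie : IsEmpty ((a : V ⊕ L) → Fin (e a)) := ⟨fun ε => (h0 ▸ ε a).elim0⟩
      refine Finset.sum_eq_zero fun xl _ => ?_
      rw [Finset.univ_eq_empty, Finset.sum_empty]
    have hone := hd.2
    rw [Finset.sum_congr rfl fun x _ => hz x, Finset.sum_const, smul_zero] at hone
    exact one_ne_zero hone.symm
  have hWne : Nonempty (cJ Cs e) := ⟨fun t => ⟨0, hepos t.1⟩⟩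
  have hWpos : 0 < cW Cs e := Fintype.card_pos_iff.mpr hWne
  obtain ⟨rk0, hrk0⟩ := G₁.acyclic
  have hrk : ∀ w v : V, G₁.edge (Sum.inl w) (Sum.inl v) →
      (fun v => rk0 (Sum.inl v)) w < (fun v => rk0 (Sum.inl v)) v :=
    fun w v hb => hrk0 _ _ hb
  set N : ℕ := (Finset.univ.sup (fun v => rk0 (Sum.inl v))) + 1 with hNdef
  have hNbig : ∀ v, (fun v => rk0 (Sum.inl v)) v < N :=
    fun v => Nat.lt_succ_of_le (Finset.le_sup (f := fun v => rk0 (Sum.inl v)) (Finset.mem_univ v))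
  -- edge preservation facts
  have hedgeC : ∀ w v, v ∈ Cs → G₁.edge (Sum.inl w) (Sum.inl v) →
      G₂.edge (Sum.inl w) (Sum.inl v) :=
    fun w v hv hb => (hVV w v).mpr ⟨hb, fun hc => hdisj v hv hc.2⟩
  have hedgeD : ∀ w v, w ∉ Cs → G₁.edge (Sum.inl w) (Sum.inl v) →
      G₂.edge (Sum.inl w) (Sum.inl v) :=
    fun w v hw hb => (hVV w v).mpr ⟨hb, fun hc => hw hc.1⟩
  have hedgeM : ∀ v, v ∈ Cs ∪ Ds → G₂.edge (Sum.inr M) (Sum.inl v) :=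
    fun v hv => (hLV M v).mpr (hMe v hv)
  -- the dependence property of the new structural functions
  have hdep₂ : ∀ a g g' ε, (∀ b, G₂.edge b a → g b = g' b) →
      eF Cs Ds M c k e f hcpos N a g ε = eF Cs Ds M c k e f hcpos N a g' ε := by
    rintro (v | l) g g' ε hag
    · simp only [eF]
      by_cases hv : v ∈ Cs
      · erw [dif_pos hv, dif_pos hv]
        have hMval : g (Sum.inr M) = g' (Sum.inr M) :=
          hag _ (hedgeM v (Finset.mem_union_left _ hv))
        rw [hMval]
        refine hf _ _ _ _ ?_
        rintro (w | l) hb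
        · exact hag _ (hedgeC w v hv hb)
        · have hlM := honly v hv l hb
          subst hlM
          show (finProdFinEquiv.symm (g (Sum.inr l))).1
            = (finProdFinEquiv.symm (g' (Sum.inr l))).1
          rw [hag _ ((hLV l v).mpr hb)]
      · erw [dif_neg hv, dif_neg hv]
        by_cases hvD : v ∈ Ds
        · erw [if_pos hvD, if_pos hvD]
          refine hf _ _ _ _ ?_
          rintro (w | l) hb
          · by_cases hw : w ∈ Cs
            · show eRec Cs M c k e f hcpos N g w = eRec Cs M c k e f hcpos N g' w
              refine eRec_congr G₁ Cs M c k e f hf honly hcpos N g g' ?_ ?_ w hw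
              · exact hag _ (hedgeM v (Finset.mem_union_right _ hvD))
              · intro u hu hex
                exact hag _ (hedgeD u v hu (hCD v hvD u hex))
            · show eRec Cs M c k e f hcpos N g w = eRec Cs M c k e f hcpos N g' w
              rw [eRec_notC _ _ _ _ _ _ _ _ _ _ hw, eRec_notC _ _ _ _ _ _ _ _ _ _ hw]
              exact hag _ (hedgeD w v hw hb)
          · show (finProdFinEquiv.symm (g (Sum.inr l))).1
              = (finProdFinEquiv.symm (g' (Sum.inr l))).1
            rw [hag _ ((hLV l v).mpr hb)]
        · erw [if_neg hvD, if_neg hvD]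
          refine hf _ _ _ _ ?_
          rintro (w | l) hb
          · exact hag _ ((hVV w v).mpr ⟨hb, fun hc => hvD hc.2⟩)
          · show (finProdFinEquiv.symm (g (Sum.inr l))).1
              = (finProdFinEquiv.symm (g' (Sum.inr l))).1
            rw [hag _ ((hLV l v).mpr hb)]
    · simp only [eF]
      have hgg : f (Sum.inr l) (eConv c k (cW Cs e) g) (finProdFinEquiv.symm ε).1
          = f (Sum.inr l) (eConv c k (cW Cs e) g') (finProdFinEquiv.symm ε).1 :=
        hf _ _ _ _ (fun b hb => absurd hb (hexo₁ b l))
      rw [hgg]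
  -- the new error distributions are distributions
  have hPE₂ : ∀ a, IsDist (ePE Cs M e PE a) := by
    intro a
    constructor
    · intro ε
      unfold ePE
      refine mul_nonneg ?_ ?_
      · split
        · exact inv_nonneg.mpr (Nat.cast_nonneg _)
        · exact (hPE a).1 _
      · split
        · exact Finset.prod_nonneg fun t _ => (hPE t.1).1 _
        · exact inv_nonneg.mpr (Nat.cast_nonneg _)
    · have key := sum_fin_mul (m := e a) (n := cW Cs e)
        (fun x => if cP Cs a then ((e a : ℝ))⁻¹ else PE a x)
        (fun y => if a = Sum.inr M then
            ∏ t : {b : V ⊕ L // cP Cs b}, PE t.1 (ceW Cs e y t)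
          else ((cW Cs e : ℝ))⁻¹)
      unfold ePE
      rw [show (∑ ε : Fin (e a * cW Cs e),
          (if cP Cs a then ((e a : ℝ))⁻¹ else PE a (finProdFinEquiv.symm ε).1) *
          (if a = Sum.inr M then
              ∏ t : {b : V ⊕ L // cP Cs b}, PE t.1 (ceW Cs e (finProdFinEquiv.symm ε).2 t)
            else ((cW Cs e : ℝ))⁻¹))
          = (∑ x, if cP Cs a then ((e a : ℝ))⁻¹ else PE a x) *
            (∑ y, if a = Sum.inr M then
              ∏ t : {b : V ⊕ L // cP Cs b}, PE t.1 (ceW Cs e y t)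
            else ((cW Cs e : ℝ))⁻¹) from key]
      have h1 : (∑ x, if cP Cs a then ((e a : ℝ))⁻¹ else PE a x) = 1 := by
        by_cases hc : cP Cs a
        · simp only [if_pos hc]
          exact sum_fin_inv (hepos a)
        · simp only [if_neg hc]
          exact (hPE a).2
      have h2 : (∑ y : Fin (cW Cs e), if a = Sum.inr M then
          ∏ t : {b : V ⊕ L // cP Cs b}, PE t.1 (ceW Cs e y t)
          else ((cW Cs e : ℝ))⁻¹) = 1 := by
        by_cases hM : a = Sum.inr M
        · simp only [if_pos hM]
          rw [Fintype.sum_equiv (ceW Cs e)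
            (fun y => ∏ t : {b : V ⊕ L // cP Cs b}, PE t.1 (ceW Cs e y t))
            (fun j => ∏ t : {b : V ⊕ L // cP Cs b}, PE t.1 (j t))
            (fun y => rfl)]
          show (∑ x : (t : {b : V ⊕ L // cP Cs b}) → Fin (e t.1),
            ∏ t : {b : V ⊕ L // cP Cs b}, PE t.1 (x t)) = 1
          rw [← Fintype.prod_sum (fun (t : {b : V ⊕ L // cP Cs b}) j => PE t.1 j)]
          exact Finset.prod_eq_one fun t _ => (hPE t.1).2
        · simp only [if_neg hM]
          exact sum_fin_inv hWpos
      rw [h1, h2, one_mul]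
  refine ⟨hd, fun l => k l * cW Cs e, fun a => e a * cW Cs e, ePE Cs M e PE,
    eF Cs Ds M c k e f hcpos N, hPE₂, hdep₂, ?_⟩
  intro xv
  have hk2pos : ∀ l, 0 < k l * cW Cs e := fun l => Nat.mul_pos (hkpos l) hWpos
  rw [hsum xv]
  rw [solve_sum G₁.edge hexo₁ c k e PE f hf
    (fun b => match b with
      | Sum.inl v => ⟨0, hcpos v⟩
      | Sum.inr l => ⟨0, hkpos l⟩) xv]
  rw [solve_sum G₂.edge hexo₂ c (fun l => k l * cW Cs e) (fun a => e a * cW Cs e)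
    (ePE Cs M e PE) (eF Cs Ds M c k e f hcpos N) hdep₂
    (fun b => match b with
      | Sum.inl v => ⟨0, hcpos v⟩
      | Sum.inr l => ⟨0, hk2pos l⟩) xv]
  refine Eq.trans ?_ (Fintype.sum_bijective _ (bigSplit_bijective Cs e M) _ _ (fun q => rfl))
  refine Eq.trans (Fintype.sum_bijective _ (recombE_bijective Cs e) _ _ (fun q => rfl)).symm ?_
  simp only [Fintype.sum_prod_type]

  -- Normalisation constants
  have hK1 : ((Fintype.card (cJ Cs e) : ℝ)
      * ∏ t : {a : V ⊕ L // cP Cs a}, ((e t.1 : ℝ))⁻¹) = 1 := by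
    have hcard : ((Fintype.card (cJ Cs e) : ℝ))
        = ∏ t : {a : V ⊕ L // cP Cs a}, ((e t.1 : ℝ)) := by
      show ((Fintype.card ((t : {a : V ⊕ L // cP Cs a}) → Fin (e t.1)) : ℝ)) = _
      rw [Fintype.card_pi, Nat.cast_prod]
      exact Finset.prod_congr rfl fun t _ => by rw [Fintype.card_fin]
    rw [hcard, ← Finset.prod_mul_distrib]
    exact Finset.prod_eq_one fun t _ => mul_inv_cancel₀ (Nat.cast_ne_zero.mpr (hepos t.1).ne')
  have hK2 : ((Fintype.card ({a : V ⊕ L // ¬ a = Sum.inr M} → Fin (cW Cs e)) : ℝ)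
      * ((cW Cs e : ℝ))⁻¹ ^ (Fintype.card (V ⊕ L) - 1)) = 1 := by
    have hsub : Fintype.card {a : V ⊕ L // ¬ a = Sum.inr M} = Fintype.card (V ⊕ L) - 1 := by
      rw [Fintype.card_subtype_compl, Fintype.card_subtype_eq]
    have hcard : ((Fintype.card ({a : V ⊕ L // ¬ a = Sum.inr M} → Fin (cW Cs e)) : ℝ))
        = ((cW Cs e : ℝ)) ^ (Fintype.card (V ⊕ L) - 1) := by
      rw [Fintype.card_fun, Fintype.card_fin, hsub, Nat.cast_pow]
    rw [hcard, ← mul_pow, mul_inv_cancel₀ (Nat.cast_ne_zero.mpr hWpos.ne'), one_pow]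
  have master : ∀ (cc : cJ Cs e) (cr : (t : {a : V ⊕ L // ¬ cP Cs a}) → Fin (e t.1))
      (m : Fin (cW Cs e)) (jr : {a : V ⊕ L // ¬ a = Sum.inr M} → Fin (cW Cs e)),
      (∏ a : V ⊕ L,
        (if jointVal c (fun l => k l * cW Cs e) xv
            (fun l => eF Cs Ds M c k e f hcpos N (Sum.inr l)
              (fun b => match b with
                | Sum.inl v => ⟨0, hcpos v⟩
                | Sum.inr l => ⟨0, hk2pos l⟩)
              (bigSplit Cs e M ((cc, cr), m, jr) (Sum.inr l))) a
          = eF Cs Ds M c k e f hcpos N a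
            (jointVal c (fun l => k l * cW Cs e) xv
              (fun l => eF Cs Ds M c k e f hcpos N (Sum.inr l)
                (fun b => match b with
                  | Sum.inl v => ⟨0, hcpos v⟩
                  | Sum.inr l => ⟨0, hk2pos l⟩)
                (bigSplit Cs e M ((cc, cr), m, jr) (Sum.inr l))))
            (bigSplit Cs e M ((cc, cr), m, jr) a)
        then (1:ℝ) else 0) * ePE Cs M e PE a (bigSplit Cs e M ((cc, cr), m, jr) a))
      = (∏ a : V ⊕ L,
          (if jointVal c k xv
              (fun l => f (Sum.inr l)
                (fun b => match b with
                  | Sum.inl v => ⟨0, hcpos v⟩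
                  | Sum.inr l => ⟨0, hkpos l⟩)
                (recombE Cs e cr m (Sum.inr l))) a
            = f a (jointVal c k xv
                (fun l => f (Sum.inr l)
                  (fun b => match b with
                    | Sum.inl v => ⟨0, hcpos v⟩
                    | Sum.inr l => ⟨0, hkpos l⟩)
                  (recombE Cs e cr m (Sum.inr l))))
              (recombE Cs e cr m a)
          then (1:ℝ) else 0) * PE a (recombE Cs e cr m a))
        * ((∏ t : {a : V ⊕ L // cP Cs a}, ((e t.1 : ℝ))⁻¹)
          * ((cW Cs e : ℝ))⁻¹ ^ (Fintype.card (V ⊕ L) - 1)) := by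
    intro cc cr m jr
    set g₀ : (b : V ⊕ L) → Fin (Sum.elim c k b) :=
      (fun b => match b with
        | Sum.inl v => ⟨0, hcpos v⟩
        | Sum.inr l => ⟨0, hkpos l⟩) with hg₀
    set g₀₂ : (b : V ⊕ L) → Fin (Sum.elim c (fun l => k l * cW Cs e) b) :=
      (fun b => match b with
        | Sum.inl v => ⟨0, hcpos v⟩
        | Sum.inr l => ⟨0, hk2pos l⟩) with hg₀₂
    set ε₂ : (a : V ⊕ L) → Fin (e a * cW Cs e) := bigSplit Cs e M ((cc, cr), m, jr) with hε₂
    set εo : (a : V ⊕ L) → Fin (e a) := recombE Cs e cr m with hεo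
    set xl₂ : (l : L) → Fin (k l * cW Cs e) :=
      (fun l => eF Cs Ds M c k e f hcpos N (Sum.inr l) g₀₂ (ε₂ (Sum.inr l))) with hxl₂
    set xlo : (l : L) → Fin (k l) := (fun l => f (Sum.inr l) g₀ (εo (Sum.inr l))) with hxlo
    have hcPinr : ∀ l : L, ¬ cP Cs (Sum.inr l) := fun l h => h
    have hfexo : ∀ (l : L) g g' ε', f (Sum.inr l) g ε' = f (Sum.inr l) g' ε' :=
      fun l g g' ε' => hf _ _ _ _ (fun b hb => absurd hb (hexo₁ b l))
    have f0a : ∀ a, ¬ cP Cs a → (finProdFinEquiv.symm (ε₂ a)).1 = εo a := by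
      intro a ha
      simp only [hε₂, hεo, bigSplit, recombE, Equiv.symm_apply_apply]
      rw [dif_neg ha, dif_neg ha]
    have f0b : (finProdFinEquiv.symm (ε₂ (Sum.inr M))).2 = m := by
      simp only [hε₂, bigSplit, Equiv.symm_apply_apply]
      simp
    have f0e : ∀ a (ha : cP Cs a), εo a = ceW Cs e m ⟨a, ha⟩ := by
      intro a ha
      simp only [hεo, recombE]
      rw [dif_pos ha]
    have f1 : ∀ l, (finProdFinEquiv.symm (xl₂ l)).1 = xlo l := by
      intro l
      simp only [hxl₂, eF, Equiv.symm_apply_apply]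
      rw [f0a _ (hcPinr l)]
      simp only [hxlo]
      exact hfexo l _ _ _
    have f1b : (finProdFinEquiv.symm (xl₂ M)).2 = m := by
      simp only [hxl₂, eF, Equiv.symm_apply_apply]
      exact f0b
    have f2 : eConv c k (cW Cs e) (jointVal c (fun l => k l * cW Cs e) xv xl₂)
        = jointVal c k xv xlo := by
      funext b
      rcases b with v | l
      · rfl
      · show (finProdFinEquiv.symm (xl₂ l)).1 = xlo l
        exact f1 l
    -- the four per-node computations of the new structural functions
    have hCeqF : ∀ v (hv : v ∈ Cs),
        eF Cs Ds M c k e f hcpos N (Sum.inl v)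
          (jointVal c (fun l => k l * cW Cs e) xv xl₂) (ε₂ (Sum.inl v))
        = f (Sum.inl v) (jointVal c k xv xlo) (εo (Sum.inl v)) := by
      intro v hv
      simp only [eF]
      erw [dif_pos hv, f2]
      have hjM : jointVal c (fun l => k l * cW Cs e) xv xl₂ (Sum.inr M) = xl₂ M := rfl
      rw [hjM, f1b, f0e (Sum.inl v) hv]
    have hOeqF : ∀ v, v ∉ Cs → v ∉ Ds →
        eF Cs Ds M c k e f hcpos N (Sum.inl v)
          (jointVal c (fun l => k l * cW Cs e) xv xl₂) (ε₂ (Sum.inl v))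
        = f (Sum.inl v) (jointVal c k xv xlo) (εo (Sum.inl v)) := by
      intro v hvC hvD
      simp only [eF]
      erw [dif_neg hvC, if_neg hvD, f2, f0a (Sum.inl v) hvC]
    have hLeqF : ∀ l : L,
        eF Cs Ds M c k e f hcpos N (Sum.inr l)
          (jointVal c (fun l => k l * cW Cs e) xv xl₂) (ε₂ (Sum.inr l)) = xl₂ l := by
      intro l
      simp only [eF]
      rw [hfexo l (eConv c k (cW Cs e) (jointVal c (fun l => k l * cW Cs e) xv xl₂))
        (eConv c k (cW Cs e) g₀₂) ((finProdFinEquiv.symm (ε₂ (Sum.inr l))).1)]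
      show _ = eF Cs Ds M c k e f hcpos N (Sum.inr l) g₀₂ (ε₂ (Sum.inr l))
      simp only [eF]
      rfl
    have hLeqf : ∀ l : L,
        f (Sum.inr l) (jointVal c k xv xlo) (εo (Sum.inr l)) = xlo l := by
      intro l
      rw [hfexo l (jointVal c k xv xlo) g₀ (εo (Sum.inr l))]
    -- the indicator products agree
    have hIndEq : (∏ a : V ⊕ L,
        (if jointVal c (fun l => k l * cW Cs e) xv xl₂ a
            = eF Cs Ds M c k e f hcpos N a
              (jointVal c (fun l => k l * cW Cs e) xv xl₂) (ε₂ a)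
          then (1:ℝ) else 0))
        = (∏ a : V ⊕ L,
          (if jointVal c k xv xlo a = f a (jointVal c k xv xlo) (εo a)
            then (1:ℝ) else 0)) := by
      by_cases hcons : ∀ x (hx : x ∈ Cs), xv x = f (Sum.inl x) (jointVal c k xv xlo)
          (ceW Cs e m ⟨Sum.inl x, hx⟩)
      · have hcons' : ∀ x (hx : x ∈ Cs), xv x = f (Sum.inl x) (jointVal c k xv xlo)
            (ceW Cs e (finProdFinEquiv.symm (xl₂ M)).2 ⟨Sum.inl x, hx⟩) := by
          intro x hx
          rw [f1b]
          exact hcons x hx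
        have hDeqF : ∀ v, v ∉ Cs → v ∈ Ds →
            eF Cs Ds M c k e f hcpos N (Sum.inl v)
              (jointVal c (fun l => k l * cW Cs e) xv xl₂) (ε₂ (Sum.inl v))
            = f (Sum.inl v) (jointVal c k xv xlo) (εo (Sum.inl v)) := by
          intro v hvC hvD
          simp only [eF]
          erw [dif_neg hvC, if_pos hvD, f0a (Sum.inl v) hvC]
          refine hf _ _ _ _ ?_
          rintro (w | l) hb
          · show eRec Cs M c k e f hcpos N
                (jointVal c (fun l => k l * cW Cs e) xv xl₂) w
              = jointVal c k xv xlo (Sum.inl w)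
            exact eRec_correct G₁ Cs M c k e f hf hcpos _ hrk xv xl₂ xlo f1 hcons'
              N w (hNbig w)
          · show (finProdFinEquiv.symm
                (jointVal c (fun l => k l * cW Cs e) xv xl₂ (Sum.inr l))).1
              = jointVal c k xv xlo (Sum.inr l)
            exact f1 l
        refine Finset.prod_congr rfl ?_
        rintro (v | l) _
        · simp only [jointVal]
          by_cases hv : v ∈ Cs
          · rw [hCeqF v hv]; rfl
          · by_cases hvD : v ∈ Ds
            · rw [hDeqF v hv hvD]; rfl
            · rw [hOeqF v hv hvD]; rfl
        · simp only [jointVal]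
          erw [if_pos (hLeqF l).symm, if_pos (hLeqf l).symm]
      · have hex : ∃ x, ∃ hx : x ∈ Cs, ¬ (xv x = f (Sum.inl x) (jointVal c k xv xlo)
            (ceW Cs e m ⟨Sum.inl x, hx⟩)) := by
          by_contra hcon
          apply hcons
          intro x hx
          by_contra hne
          exact hcon ⟨x, hx, hne⟩
        obtain ⟨x, hx, hne⟩ := hex
        have hz2 : (∏ a : V ⊕ L,
            (if jointVal c (fun l => k l * cW Cs e) xv xl₂ a
                = eF Cs Ds M c k e f hcpos N a
                  (jointVal c (fun l => k l * cW Cs e) xv xl₂) (ε₂ a)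
              then (1:ℝ) else 0)) = 0 := by
          refine Finset.prod_eq_zero (Finset.mem_univ (Sum.inl x)) ?_
          rw [if_neg]
          intro hcond
          have h' : xv x = f (Sum.inl x) (jointVal c k xv xlo) (εo (Sum.inl x)) := by
            rw [← hCeqF x hx]
            exact hcond
          rw [f0e (Sum.inl x) hx] at h'
          exact hne h'
        have hz1 : (∏ a : V ⊕ L,
            (if jointVal c k xv xlo a = f a (jointVal c k xv xlo) (εo a)
              then (1:ℝ) else 0)) = 0 := by
          refine Finset.prod_eq_zero (Finset.mem_univ (Sum.inl x)) ?_
          rw [if_neg]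
          intro hcond
          have h' : xv x = f (Sum.inl x) (jointVal c k xv xlo) (εo (Sum.inl x)) := hcond
          rw [f0e (Sum.inl x) hx] at h'
          exact hne h'
        rw [hz1, hz2]
    -- the error-probability products agree up to the constants
    have hPEEq : (∏ a : V ⊕ L, ePE Cs M e PE a (ε₂ a))
        = (∏ a : V ⊕ L, PE a (εo a))
          * ((∏ t : {a : V ⊕ L // cP Cs a}, ((e t.1 : ℝ))⁻¹)
            * ((cW Cs e : ℝ))⁻¹ ^ (Fintype.card (V ⊕ L) - 1)) := by
      have hfac : ∀ a, ePE Cs M e PE a (ε₂ a)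
          = (if cP Cs a then ((e a : ℝ))⁻¹ else PE a (εo a))
            * (if a = Sum.inr M then
                ∏ t : {b : V ⊕ L // cP Cs b}, PE t.1 (ceW Cs e m t)
              else ((cW Cs e : ℝ))⁻¹) := by
        intro a
        unfold ePE
        congr 1
        · by_cases hc : cP Cs a
          · rw [if_pos hc, if_pos hc]
          · rw [if_neg hc, if_neg hc, f0a a hc]
        · by_cases hM2 : a = Sum.inr M
          · rw [if_pos hM2, if_pos hM2]
            subst hM2
            rw [f0b]
          · rw [if_neg hM2, if_neg hM2]
      rw [Finset.prod_congr rfl (fun a _ => hfac a), Finset.prod_mul_distrib]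
      have hQ : (∏ a : V ⊕ L, (if cP Cs a then ((e a : ℝ))⁻¹ else PE a (εo a)))
          = (∏ t : {a : V ⊕ L // cP Cs a}, ((e t.1 : ℝ))⁻¹)
            * (∏ t : {a : V ⊕ L // ¬ cP Cs a}, PE t.1 (εo t.1)) := by
        rw [← Fintype.prod_subtype_mul_prod_subtype (cP Cs)
          (fun a => if cP Cs a then ((e a : ℝ))⁻¹ else PE a (εo a))]
        congr 1
        · exact Finset.prod_congr rfl fun t _ => if_pos t.2
        · exact Finset.prod_congr rfl fun t _ => if_neg t.2
      have hR : (∏ a : V ⊕ L, (if a = Sum.inr M then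
            ∏ t : {b : V ⊕ L // cP Cs b}, PE t.1 (ceW Cs e m t)
          else ((cW Cs e : ℝ))⁻¹))
          = (∏ t : {b : V ⊕ L // cP Cs b}, PE t.1 (ceW Cs e m t))
            * ((cW Cs e : ℝ))⁻¹ ^ (Fintype.card (V ⊕ L) - 1) := by
        rw [← Finset.mul_prod_erase Finset.univ _ (Finset.mem_univ (Sum.inr M))]
        rw [if_pos rfl]
        congr 1
        rw [Finset.prod_congr rfl (fun a (ha : a ∈ Finset.univ.erase (Sum.inr M)) =>
          if_neg (Finset.ne_of_mem_erase ha)),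
          Finset.prod_const, Finset.card_erase_of_mem (Finset.mem_univ _),
          Finset.card_univ]
      have hO : (∏ a : V ⊕ L, PE a (εo a))
          = (∏ t : {b : V ⊕ L // cP Cs b}, PE t.1 (ceW Cs e m t))
            * (∏ t : {a : V ⊕ L // ¬ cP Cs a}, PE t.1 (εo t.1)) := by
        rw [← Fintype.prod_subtype_mul_prod_subtype (cP Cs) (fun a => PE a (εo a))]
        congr 1
        exact Finset.prod_congr rfl fun t _ => by rw [f0e t.1 t.2]
      rw [hQ, hR, hO]
      ring
    rw [Finset.prod_mul_distrib, Finset.prod_mul_distrib, hIndEq, hPEEq]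
    ring
  rw [Finset.sum_congr rfl (fun cc (_ : cc ∈ Finset.univ) => Finset.sum_congr rfl
    (fun cr (_ : cr ∈ Finset.univ) => Finset.sum_congr rfl
    (fun m (_ : m ∈ Finset.univ) => Finset.sum_congr rfl
    (fun jr (_ : jr ∈ Finset.univ) => master cc cr m jr))))]
  simp only [Finset.sum_const, Finset.card_univ, nsmul_eq_mul]
  rw [Finset.mul_sum]
  refine Finset.sum_congr rfl fun cr _ => ?_
  rw [Finset.mul_sum]
  refine Finset.sum_congr rfl fun m _ => ?_
  exact (evans_alg _ _ _ _ _ hK1 hK2).symm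

end Evans3
section Glue

variable {V : Type}

/-- Every face of an mDAG is contained in a facet. -/
lemma mDAG.subset_facet (H : mDAG V) {B : Finset V} (hB : B ∈ H.faces) :
    ∃ A : Finset V, H.IsFacet A ∧ B ⊆ A := by
  classical
  have hne : (H.faces.filter (fun A => B ⊆ A)).Nonempty :=
    ⟨B, Finset.mem_filter.mpr ⟨hB, Finset.Subset.refl B⟩⟩
  obtain ⟨A, hA, hmax⟩ := Finset.exists_max_image _ (fun A => A.card) hne
  rw [Finset.mem_filter] at hA
  refine ⟨A, ⟨hA.1, ?_⟩, hA.2⟩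
  intro B' hB' hAB'
  have hB'f : B' ∈ H.faces.filter (fun A => B ⊆ A) :=
    Finset.mem_filter.mpr ⟨hB', hA.2.trans hAB'⟩
  exact Finset.eq_of_subset_of_card_le hAB' (hmax B' hB'f)

end Glue

/-- Let `G = (D, B)` be an mDAG with two disjoint facets `C` and `Df`
satisfying (1) for each `d ∈ Df`, every element of `C` and every parent (in `D`) of an
element of `C` is a parent of `d`, and (2) for every `c ∈ C`, `C` is the only facet
containing `c`.  Let `G'` be `G` with the facet `C ∪ Df` (and all its subsets) added to
the simplicial complex, and let `G''` be `G'` with every directed edge `c → d`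
(`c ∈ C`, `d ∈ Df`) removed.  Then `G'` and `G''` are observationally equivalent
(so Evans' rule is subsumed by weak facet-merging followed by the HLP edge-adding
rule). -/
theorem weak_fm_and_hlp_subsume_evans
    {V : Type} [Fintype V] [DecidableEq V] (G G' G'' : mDAG V) (C Df : Finset V)
    (hC : G.IsFacet C) (hDf : G.IsFacet Df) (hdisj : Disjoint C Df)
    (h1 : ∀ d ∈ Df, (∀ x ∈ C, G.edge x d) ∧
      ∀ p : V, (∃ x ∈ C, G.edge p x) → G.edge p d)
    (h2 : ∀ c ∈ C, ∀ A : Finset V, G.IsFacet A → c ∈ A → A = C)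
    (hedge' : ∀ a b : V, G'.edge a b ↔ G.edge a b)
    (hfaces' : G'.faces = G.faces ∪ (C ∪ Df).powerset)
    (hedge'' : ∀ a b : V, G''.edge a b ↔ (G.edge a b ∧ ¬(a ∈ C ∧ b ∈ Df)))
    (hfaces'' : G''.faces = G.faces ∪ (C ∪ Df).powerset) :
    G'.ObsEquiv G'' := by
  classical
  have hIsF : ∀ A, G'.IsFacet A ↔ G''.IsFacet A := by
    intro A
    unfold mDAG.IsFacet
    rw [hfaces', hfaces'']
  let σ : G'.Facets ≃ G''.Facets := Equiv.subtypeEquivRight hIsF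
  have hMface : C ∪ Df ∈ G''.faces := by
    rw [hfaces'']
    exact Finset.mem_union_right _ (Finset.mem_powerset.mpr (Finset.Subset.refl _))
  have hMfacet : G''.IsFacet (C ∪ Df) := by
    refine ⟨hMface, ?_⟩
    intro B hB hsub
    rw [hfaces''] at hB
    rcases Finset.mem_union.mp hB with hBG | hBpow
    · rcases Finset.eq_empty_or_nonempty C with hCe | ⟨x, hx⟩
      · rw [hCe, Finset.empty_union]
        rw [hCe, Finset.empty_union] at hsub
        exact hDf.2 B hBG hsub
      · obtain ⟨A, hAf, hBA⟩ := G.subset_facet hBG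
        have hAC : A = C := h2 x hx A hAf (hBA (hsub (Finset.mem_union_left _ hx)))
        have hBC : B ⊆ C := hAC ▸ hBA
        have hDfC : Df ⊆ C := fun y hy => hBC (hsub (Finset.mem_union_right _ hy))
        have hDfe : Df = ∅ := hdisj.symm.eq_bot_of_le hDfC
        have hCB : C ⊆ B := fun y hy => hsub (Finset.mem_union_left _ hy)
        rw [hDfe, Finset.union_empty]
        exact (Finset.Subset.antisymm hBC hCB).symm
    · exact Finset.Subset.antisymm hsub (Finset.mem_powerset.mp hBpow)
  have honlyFacet : ∀ x ∈ C, ∀ A : Finset V, G''.IsFacet A → x ∈ A → A = C ∪ Df := by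
    intro x hx A hA hxA
    have hAf := hA.1
    rw [hfaces''] at hAf
    rcases Finset.mem_union.mp hAf with hAG | hApow
    · obtain ⟨B, hBf, hAB⟩ := G.subset_facet hAG
      have hBC : B = C := h2 x hx B hBf (hAB hxA)
      refine hA.2 (C ∪ Df) hMface ?_
      exact fun y hy => Finset.mem_union_left _ (hBC ▸ hAB hy)
    · exact hA.2 (C ∪ Df) hMface (Finset.mem_powerset.mp hApow)
  set Mf : G''.Facets := ⟨C ∪ Df, hMfacet⟩ with hMf
  let H : pDAG V G''.Facets :=
    { edge := fun a b => match a, b with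
        | Sum.inl u, Sum.inl v => G'.edge u v
        | Sum.inr A, Sum.inl v => v ∈ A.1
        | _, Sum.inr _ => False
      acyclic := by
        obtain ⟨r, hr⟩ := G'.acyclic
        refine ⟨Sum.elim (fun v => r v + 1) (fun _ => 0), ?_⟩
        rintro (u | A) (v | B) h
        · simpa using hr u v h
        · exact h.elim
        · simp
        · exact h.elim }
  intro c P
  constructor
  · -- hard direction: G' realizable → G'' realizable
    intro hP
    have step1 : H.Realizable c P := by
      refine pDAG.realizable_transfer G'.canon H σ ?_ c P hP
      rintro (u | A) (v | B) h
      · exact h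
      · exact h.elim
      · exact h
      · exact h.elim
    refine pDAG.realizable_evans H G''.canon C Df Mf ?_ ?_ ?_ ?_ ?_ ?_ ?_ ?_ c P step1
    · rintro (u | A) l h <;> exact h
    · rintro (u | A) l h <;> exact h
    · intro u v
      constructor
      · intro h
        exact ⟨(hedge' u v).mpr ((hedge'' u v).mp h).1, ((hedge'' u v).mp h).2⟩
      · rintro ⟨hh1, hh2⟩
        exact (hedge'' u v).mpr ⟨(hedge' u v).mp hh1, hh2⟩
    · intro l v
      exact Iff.rfl
    · intro v hv
      exact hv
    · intro x hx A h
      exact Subtype.ext (honlyFacet x hx A.1 A.2 h)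
    · exact fun x hx => Finset.disjoint_left.mp hdisj hx
    · rintro d hd p ⟨x, hx, hpx⟩
      exact (hedge' p d).mpr ((h1 d hd).2 p ⟨x, hx, (hedge' p x).mp hpx⟩)
  · -- easy direction: G'' realizable → G' realizable
    intro hP
    refine pDAG.realizable_transfer G''.canon G'.canon σ.symm ?_ c P hP
    rintro (u | A) (v | B) h
    · exact (hedge' u v).mpr ((hedge'' u v).mp h).1
    · exact h.elim
    · exact h
    · exact h.elim
end
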